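/- arXiv:0905.2644 — 3 statements merged into one kernel-verified Lean document; each statement's English description precedes it below -/
import Mathlib

section
/- For every positive integer k, there exists a finite digraph D with stability number exactly k such that for every collection of k−1 directed paths P₁, …, P_{k−1} in D, the subdigraph of D induced on the vertices lying on none of these paths still has stability number k. -/
namespace HJaux

open Combinatorics Function

noncomputable section


section Step

variable {V : Type} {N : ℕ}

def Cx (col : V → Fin N) (x : Fin N) : Type := {v : V // col v = x}

def Vr (col : V → Fin N) (x : Fin N) : Type := {v : V // col v ≠ x}

def NewV (ι : Type) (col : V → Fin N) (x : Fin N) : Type :=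
  (ι → Cx col x) ⊕ ((ι → Option (Cx col x)) × Vr col x)

def LineAdj (ι : Type) (adj : V → V → Prop) (col : V → Fin N) (x : Fin N)
    (w : ι → Cx col x) (F : ι → Option (Cx col x)) (u : Vr col x) : Prop :=
  (∃ i, F i = none) ∧ ∃ a : Cx col x, (∀ i, w i = (F i).getD a) ∧ adj a.1 u.1

def NewAdj (ι : Type) (adj : V → V → Prop) (col : V → Fin N) (x : Fin N) :
    NewV ι col x → NewV ι col x → Prop
  | .inl _, .inl _ => False
  | .inl w, .inr Fu => LineAdj ι adj col x w Fu.1 Fu.2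
  | .inr Fu, .inl w => LineAdj ι adj col x w Fu.1 Fu.2
  | .inr Fu, .inr Fu' => Fu.1 = Fu'.1 ∧ adj Fu.2.1 Fu'.2.1

def NewCol (ι : Type) (col : V → Fin N) (x : Fin N) : NewV ι col x → Fin N
  | .inl _ => x
  | .inr Fu => col Fu.2.1

def Emb (ι : Type) (col : V → Fin N) (x : Fin N) (ℓ : Line (Cx col x) ι) :
    V → NewV ι col x :=
  fun v => if h : col v = x then .inl (⇑ℓ ⟨v, h⟩) else .inr (ℓ.idxFun, ⟨v, h⟩)

end Step

def Extracts (k N : ℕ) (V : Type) (adj : V → V → Prop) (col : V → Fin N)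
    (cols : List (Fin N)) : Prop :=
  ∀ χ : V → Fin k, ∃ g : Fin N × Fin k → V,
    Function.Injective g ∧
    (∀ p q : Fin N × Fin k, p.1 ≠ q.1 → p.2 ≠ q.2 → adj (g p) (g q)) ∧
    (∀ p, col (g p) = p.1) ∧
    (∀ x ∈ cols, ∀ i j : Fin k, χ (g (x, i)) = χ (g (x, j)))

def GoodSys (k N : ℕ) (cols : List (Fin N)) : Prop :=
  ∃ (V : Type) (_ : Fintype V) (adj : V → V → Prop) (col : V → Fin N),
    (∀ u v, adj u v → adj v u) ∧
    (∀ u v, adj u v → col u ≠ col v) ∧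
    (∀ S : Finset V, (∀ u ∈ S, ∀ v ∈ S, u ≠ v → adj u v) → S.card ≤ k) ∧
    Extracts k N V adj col cols

lemma goodSys_cons {k N : ℕ} (hk : 0 < k) (x : Fin N) (cs : List (Fin N))
    (h : GoodSys k N cs) : GoodSys k N (x :: cs) := by
  classical
  obtain ⟨V, fV, adj, col, hsymm, hcne, hclq, hext⟩ := h
  haveI := fV
  -- column x is nonempty
  obtain ⟨g0, hg0i, hg0a, hg0c, hg0m⟩ := hext (fun _ => ⟨0, hk⟩)
  haveI : Nonempty (Cx col x) := ⟨⟨g0 (x, ⟨0, hk⟩), hg0c _⟩⟩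
  haveI : Finite (Cx col x) := by unfold Cx; infer_instance
  haveI : Finite (Vr col x) := by unfold Vr; infer_instance
  obtain ⟨ι, fι, hHJ⟩ := Line.exists_mono_in_high_dimension (Cx col x) (Fin k)
  haveI := fι
  haveI : Fintype (Cx col x) := Fintype.ofFinite _
  haveI : Fintype (Vr col x) := Fintype.ofFinite _
  haveI : Fintype (NewV ι col x) := by unfold NewV; infer_instance
  refine ⟨NewV ι col x, inferInstance, NewAdj ι adj col x, NewCol ι col x,
    ?_, ?_, ?_, ?_⟩
  · -- symmetry
    rintro (w | Fu) (w' | Fu') h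
    · exact h.elim
    · exact h
    · exact h
    · exact ⟨h.1.symm, hsymm _ _ h.2⟩
  · -- adjacent vertices lie in different columns
    rintro (w | Fu) (w' | Fu') h
    · exact h.elim
    · show x ≠ col Fu'.2.1
      exact fun hcx => Fu'.2.2 hcx.symm
    · show col Fu.2.1 ≠ x
      exact Fu.2.2
    · exact hcne _ _ h.2
  · -- clique bound
    intro S hS
    by_cases hcard : S.card ≤ 1
    · exact hcard.trans hk
    · obtain ⟨z₁, hz₁, z₂, hz₂, hz12⟩ := Finset.one_lt_card.mp (lt_of_not_ge hcard)
      have hinl : ∀ w w', Sum.inl w ∈ S → Sum.inl w' ∈ S → w = w' := by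
        intro w w' h1 h2
        by_contra hne
        exact hS _ h1 _ h2 (fun hcc => hne (Sum.inl.inj hcc))
      have hexr : ∃ Fu, Sum.inr Fu ∈ S := by
        rcases z₁ with w₁ | Fu₁
        · rcases z₂ with w₂ | Fu₂
          · exact absurd (congrArg Sum.inl (hinl _ _ hz₁ hz₂)) hz12
          · exact ⟨Fu₂, hz₂⟩
        · exact ⟨Fu₁, hz₁⟩
      obtain ⟨⟨F₀, u₀⟩, hFu₀⟩ := hexr
      have hFeq : ∀ Fu, Sum.inr Fu ∈ S → Fu.1 = F₀ := by
        intro Fu hFu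
        by_cases heq : Fu = (F₀, u₀)
        · rw [heq]
        · exact (hS _ hFu _ hFu₀ (fun hcc => heq (Sum.inr.inj hcc))).1
      set ρ : NewV ι col x → V := Sum.elim (fun _ => u₀.1) (fun Fu => Fu.2.1) with hρ
      set Sl := S.filter (fun z => z.isLeft = true) with hSldef
      set Sr := S.filter (fun z => ¬ z.isLeft = true) with hSrdef
      have hsplit : Sl.card + Sr.card = S.card :=
        Finset.card_filter_add_card_filter_not _
      have hmemSr : ∀ z ∈ Sr, ∃ Fu, z = Sum.inr Fu ∧ Sum.inr Fu ∈ S := by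
        intro z hz
        obtain ⟨hzS, hzL⟩ := Finset.mem_filter.mp hz
        rcases z with w | Fu
        · exact absurd rfl hzL
        · exact ⟨Fu, rfl, hzS⟩
      have hSl1 : Sl.card ≤ 1 := by
        refine Finset.card_le_one.mpr ?_
        intro a ha b hb
        obtain ⟨haS, haL⟩ := Finset.mem_filter.mp ha
        obtain ⟨hbS, hbL⟩ := Finset.mem_filter.mp hb
        rcases a with w | Fu
        · rcases b with w' | Fu'
          · exact congrArg Sum.inl (hinl _ _ haS hbS)
          · exact absurd hbL (by simp)
        · exact absurd haL (by simp)
      set T := Sr.image ρ with hT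
      have hTcard : T.card = Sr.card := by
        refine Finset.card_image_of_injOn ?_
        intro z hz z' hz' hzz
        obtain ⟨Fu, rfl, hFuS⟩ := hmemSr z hz
        obtain ⟨Fu', rfl, hFu'S⟩ := hmemSr z' hz'
        have h2 : Fu.2 = Fu'.2 := Subtype.ext hzz
        have h1 : Fu.1 = Fu'.1 := (hFeq _ hFuS).trans (hFeq _ hFu'S).symm
        rw [Prod.ext h1 h2]
      have hTadj : ∀ a ∈ T, ∀ b ∈ T, a ≠ b → adj a b := by
        intro a ha b hb hab
        obtain ⟨z, hz, rfl⟩ := Finset.mem_image.mp ha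
        obtain ⟨z', hz', rfl⟩ := Finset.mem_image.mp hb
        obtain ⟨Fu, rfl, hFuS⟩ := hmemSr z hz
        obtain ⟨Fu', rfl, hFu'S⟩ := hmemSr z' hz'
        have hzz : (Sum.inr Fu : NewV ι col x) ≠ Sum.inr Fu' := by
          intro hcc; exact hab (congrArg ρ hcc)
        exact (hS _ hFuS _ hFu'S hzz).2
      by_cases hSlE : Sl = ∅
      · rw [hSlE] at hsplit
        simp only [Finset.card_empty, zero_add] at hsplit
        rw [← hsplit, ← hTcard]
        exact hclq T hTadj
      · obtain ⟨zw, hzw⟩ := Finset.nonempty_iff_ne_empty.mpr hSlE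
        obtain ⟨hzwS, hzwL⟩ := Finset.mem_filter.mp hzw
        rcases zw with w | Fu
        swap
        · exact absurd hzwL (by simp)
        have hSl1' : Sl.card = 1 := le_antisymm hSl1 (Finset.card_pos.mpr ⟨_, hzw⟩)
        have hwadj : NewAdj ι adj col x (Sum.inl w) (Sum.inr (F₀, u₀)) :=
          hS _ hzwS _ hFu₀ Sum.inl_ne_inr
        obtain ⟨⟨i₀, hi₀⟩, a, haw, haadj⟩ := hwadj
        have haT : a.1 ∉ T := by
          intro hmem
          obtain ⟨z, hz, hzeq⟩ := Finset.mem_image.mp hmem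
          obtain ⟨Fu, rfl, _⟩ := hmemSr z hz
          have hval : (Fu.2.1 : V) = a.1 := hzeq
          exact Fu.2.2 (by rw [hval]; exact a.2)
        have hcardT' : (insert a.1 T).card = S.card := by
          rw [Finset.card_insert_of_notMem haT, hTcard, ← hsplit, hSl1']
          omega
        have hT'adj : ∀ p ∈ insert a.1 T, ∀ q ∈ insert a.1 T, p ≠ q → adj p q := by
          have key : ∀ q ∈ T, adj a.1 q := by
            intro q hq
            obtain ⟨z, hz, rfl⟩ := Finset.mem_image.mp hq
            obtain ⟨Fu, rfl, hFuS⟩ := hmemSr z hz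
            have hwFu : NewAdj ι adj col x (Sum.inl w) (Sum.inr Fu) :=
              hS _ hzwS _ hFuS Sum.inl_ne_inr
            obtain ⟨_, a', ha'w, ha'adj⟩ := hwFu
            have hFF : Fu.1 = F₀ := hFeq _ hFuS
            have ha'a : a' = a := by
              have hi₀' : F₀ i₀ = none := hi₀
              have h1 : w i₀ = (F₀ i₀).getD a := haw i₀
              have h2 : w i₀ = (Fu.1 i₀).getD a' := ha'w i₀
              rw [hFF, hi₀'] at h2
              rw [hi₀'] at h1
              simp only [Option.getD_none] at h1 h2
              rw [← h2]; exact h1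
            rw [← ha'a]
            exact ha'adj
          intro p hp q hq hpq
          rcases Finset.mem_insert.mp hp with rfl | hpT
          · rcases Finset.mem_insert.mp hq with rfl | hqT
            · exact absurd rfl hpq
            · exact key q hqT
          · rcases Finset.mem_insert.mp hq with rfl | hqT
            · exact hsymm _ _ (key p hpT)
            · exact hTadj p hpT q hqT hpq
        rw [← hcardT']
        exact hclq _ hT'adj
  · -- extraction
    intro χ'
    obtain ⟨ℓ, c, hc⟩ := hHJ (fun w => χ' (.inl w))
    obtain ⟨g, hgi, hga, hgc, hgm⟩ := hext (fun v => χ' (Emb ι col x ℓ v))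
    have hembcol : ∀ v, NewCol ι col x (Emb ι col x ℓ v) = col v := by
      intro v
      unfold Emb
      by_cases h : col v = x
      · erw [dif_pos h]; exact h.symm ▸ rfl
      · erw [dif_neg h]; rfl
    have hembinj : Function.Injective (Emb ι col x ℓ) := by
      intro v v' hvv
      unfold Emb at hvv
      by_cases h : col v = x <;> by_cases h' : col v' = x
      · erw [dif_pos h, dif_pos h'] at hvv
        have hw := Sum.inl.inj hvv
        obtain ⟨i0, hi0⟩ := ℓ.proper
        have := congrFun hw i0
        erw [ℓ.apply_none _ _ hi0, ℓ.apply_none _ _ hi0] at this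
        exact congrArg Subtype.val this
      · erw [dif_pos h, dif_neg h'] at hvv; exact absurd hvv (by simp)
      · erw [dif_neg h, dif_pos h'] at hvv; exact absurd hvv (by simp)
      · erw [dif_neg h, dif_neg h'] at hvv
        have := (Prod.ext_iff.mp (Sum.inr.inj hvv)).2
        exact congrArg Subtype.val this
    have hembadj : ∀ v v', adj v v' →
        NewAdj ι adj col x (Emb ι col x ℓ v) (Emb ι col x ℓ v') := by
      intro v v' hvv
      have hne := hcne _ _ hvv
      unfold Emb
      by_cases h : col v = x <;> by_cases h' : col v' = x
      · exact absurd (h.trans h'.symm) hne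
      · erw [dif_pos h, dif_neg h']
        exact ⟨ℓ.proper, ⟨v, h⟩, fun i => rfl, hvv⟩
      · erw [dif_neg h, dif_pos h']
        exact ⟨ℓ.proper, ⟨v', h'⟩, fun i => rfl, hsymm _ _ hvv⟩
      · erw [dif_neg h, dif_neg h']
        exact ⟨rfl, hvv⟩
    have hembc : ∀ v (h : col v = x), χ' (Emb ι col x ℓ v) = c := by
      intro v h
      unfold Emb
      erw [dif_pos h]
      exact hc ⟨v, h⟩
    refine ⟨fun p => Emb ι col x ℓ (g p), hembinj.comp hgi, ?_, ?_, ?_⟩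
    · intro p q h1 h2
      exact hembadj _ _ (hga p q h1 h2)
    · intro p; rw [hembcol]; exact hgc p
    · intro y hy i j
      rcases List.mem_cons.mp hy with rfl | hy'
      · rw [hembc _ (hgc (y, i)), hembc _ (hgc (y, j))]
      · exact hgm y hy' i j

lemma goodSys_all (k N : ℕ) (hk : 0 < k) (cols : List (Fin N)) : GoodSys k N cols := by
  induction cols with
  | nil =>
    classical
    refine ⟨Fin N × Fin k, inferInstance,
      fun p q => p.1 ≠ q.1 ∧ p.2 ≠ q.2, Prod.fst, ?_, ?_, ?_, ?_⟩
    · exact fun u v h => ⟨h.1.symm, h.2.symm⟩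
    · exact fun u v h => h.1
    · intro S hS
      have hinj : Set.InjOn Prod.snd (S : Set (Fin N × Fin k)) := by
        intro u hu v hv huv
        by_contra hne
        exact (hS u hu v hv hne).2 huv
      calc S.card = (S.image Prod.snd).card := (Finset.card_image_of_injOn hinj).symm
      _ ≤ Fintype.card (Fin k) := by
          simpa using Finset.card_le_univ (S.image Prod.snd)
      _ = k := by simp
    · intro χ
      refine ⟨id, fun a b h => h, ?_, ?_, ?_⟩
      · intro p q h1 h2; exact ⟨h1, h2⟩
      · intro p; rfl
      · intro x hx; simp at hx
  | cons x cs ih => exact goodSys_cons hk x cs ih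

lemma folkman (k : ℕ) (hk : 0 < k) :
    ∃ (Λ : Type) (_ : Fintype Λ) (H : Λ → Λ → Prop),
      (∀ u v, H u v → H v u) ∧
      (∀ S : Finset Λ, (∀ u ∈ S, ∀ v ∈ S, u ≠ v → H u v) → S.card ≤ k) ∧
      (∀ χ : Λ → Fin k, ∃ (S : Finset Λ) (c : Fin k), S.card = k ∧
        (∀ u ∈ S, ∀ v ∈ S, u ≠ v → H u v) ∧ (∀ u ∈ S, χ u = c)) := by
  classical
  set N := k * (k - 1) + 1 with hN
  obtain ⟨V, fV, adj, col, hsymm, hcne, hclq, hext⟩ :=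
    goodSys_all k N hk (List.finRange N)
  haveI := fV
  refine ⟨V, fV, adj, hsymm, hclq, ?_⟩
  intro χ
  obtain ⟨g, hgi, hga, hgc, hgm⟩ := hext χ
  set d0 : Fin k := ⟨0, hk⟩ with hd0
  set f : Fin N → Fin k := fun y => χ (g (y, d0)) with hf
  -- pigeonhole: some fiber of f has at least k elements
  have hpig : ∃ c : Fin k, k ≤ (Finset.univ.filter fun y => f y = c).card := by
    obtain ⟨c, _, hc⟩ := Finset.exists_lt_card_fiber_of_mul_lt_card_of_maps_to
      (s := (Finset.univ : Finset (Fin N))) (t := (Finset.univ : Finset (Fin k)))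
      (f := f) (n := k - 1) (fun a _ => Finset.mem_univ _)
      (by simp only [Finset.card_univ, Fintype.card_fin, hN]; omega)
    exact ⟨c, by omega⟩
  obtain ⟨c, hc⟩ := hpig
  obtain ⟨U, hUsub, hUcard⟩ := Finset.exists_subset_card_eq hc
  set σ := U.orderIsoOfFin hUcard with hσ
  refine ⟨Finset.image (fun s : Fin k => g (((σ s : U) : Fin N), s)) Finset.univ, c, ?_, ?_, ?_⟩
  · rw [Finset.card_image_of_injective _ ?_, Finset.card_univ, Fintype.card_fin]
    intro s s' hss
    have := hgi hss
    exact (Prod.ext_iff.mp this).2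
  · intro u hu v hv huv
    obtain ⟨s, _, rfl⟩ := Finset.mem_image.mp hu
    obtain ⟨s', _, rfl⟩ := Finset.mem_image.mp hv
    have hss : s ≠ s' := fun hcc => huv (by rw [hcc])
    refine hga _ _ ?_ hss
    intro hcc
    exact hss (σ.injective (Subtype.ext hcc))
  · intro u hu
    obtain ⟨s, _, rfl⟩ := Finset.mem_image.mp hu
    have h1 : χ (g (((σ s : U) : Fin N), s)) = χ (g (((σ s : U) : Fin N), d0)) :=
      hgm _ (List.mem_finRange _) s d0
    have h2 : f ((σ s : U) : Fin N) = c := by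
      have := hUsub (σ s).2
      exact (Finset.mem_filter.mp this).2
    rw [h1]
    exact h2


end

end HJaux

/-- For every positive integer `k`, there exists a finite digraph `D` (vertex type `V` with an
irreflexive edge relation `E`) with stability number exactly `k`, such that for every collection
of `k - 1` directed paths, the induced subdigraph on the vertices lying on none of these paths
still has stability number `k`. -/
theorem hahn_jackson_conjecture (k : ℕ) (hk : 0 < k) :
    ∃ (V : Type) (_ : Fintype V) (E : V → V → Prop),
      Irreflexive E ∧
      IsGreatest {m : ℕ | ∃ S : Finset V, S.card = m ∧ ∀ u ∈ S, ∀ v ∈ S, ¬ E u v} k ∧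
      ∀ P : Fin (k - 1) → List V,
        (∀ i, (P i).Nodup ∧ (P i).Chain' E) →
        IsGreatest {m : ℕ | ∃ S : Finset V, S.card = m ∧
          (∀ v ∈ S, ∀ i, v ∉ P i) ∧ ∀ u ∈ S, ∀ v ∈ S, ¬ E u v} k := by
  classical
  obtain ⟨Λ, fΛ, Hrel, hsym, hclq, hmono⟩ := HJaux.folkman k hk
  haveI := fΛ
  set e : Λ → ℕ := fun u => ((Fintype.equivFin Λ) u : ℕ) with he
  have einj : Function.Injective e := by
    intro u v h
    exact (Fintype.equivFin Λ).injective (Fin.val_injective h)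
  set E : Λ × Fin k → Λ × Fin k → Prop :=
    fun p q => e p.1 < e q.1 ∧ ¬ (p.2 = q.2 ∧ Hrel p.1 q.1) with hE
  have key : ∀ S : Finset (Λ × Fin k), (∀ u ∈ S, ∀ v ∈ S, ¬ E u v) →
      ∀ u ∈ S, ∀ v ∈ S, u.1 ≠ v.1 → (u.2 = v.2 ∧ Hrel u.1 v.1) := by
    intro S hS u hu v hv hne
    rcases lt_trichotomy (e u.1) (e v.1) with h | h | h
    · by_contra hX
      exact hS u hu v hv ⟨h, hX⟩
    · exact absurd (einj h) hne
    · by_contra hX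
      refine hS v hv u hu ⟨h, ?_⟩
      rintro ⟨h1, h2⟩
      exact hX ⟨h1.symm, hsym _ _ h2⟩
  have stable_le : ∀ S : Finset (Λ × Fin k), (∀ u ∈ S, ∀ v ∈ S, ¬ E u v) → S.card ≤ k := by
    intro S hS
    by_cases hsame : ∃ u ∈ S, ∃ v ∈ S, u ≠ v ∧ u.1 = v.1
    · obtain ⟨u, hu, v, hv, huv, hfst⟩ := hsame
      have hall : ∀ w ∈ S, w.1 = u.1 := by
        intro w hw
        by_contra hne
        have hne' : w.1 ≠ v.1 := hfst ▸ hne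
        have h1 := key S hS w hw u hu hne
        have h2 := key S hS w hw v hv hne'
        exact huv (Prod.ext hfst (h1.1.symm.trans h2.1))
      have hinj : Set.InjOn Prod.snd (S : Set (Λ × Fin k)) := by
        intro p hp q hq hpq
        exact Prod.ext ((hall p hp).trans (hall q hq).symm) hpq
      calc S.card = (S.image Prod.snd).card := (Finset.card_image_of_injOn hinj).symm
        _ ≤ k := by simpa using Finset.card_le_univ (S.image Prod.snd)
    · push_neg at hsame
      have hinj : Set.InjOn Prod.fst (S : Set (Λ × Fin k)) := by
        intro p hp q hq hpq
        by_contra hne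
        exact hsame p hp q hq hne hpq
      have hcl : ∀ y ∈ S.image Prod.fst, ∀ z ∈ S.image Prod.fst, y ≠ z → Hrel y z := by
        intro y hy z hz hyz
        obtain ⟨p, hp, rfl⟩ := Finset.mem_image.mp hy
        obtain ⟨q, hq, rfl⟩ := Finset.mem_image.mp hz
        exact (key S hS p hp q hq hyz).2
      calc S.card = (S.image Prod.fst).card := (Finset.card_image_of_injOn hinj).symm
        _ ≤ k := hclq _ hcl
  have build : ∀ f : Λ → Fin k, ∃ S : Finset (Λ × Fin k), S.card = k ∧
      (∀ p ∈ S, p.2 = f p.1) ∧ (∀ u ∈ S, ∀ v ∈ S, ¬ E u v) := by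
    intro f
    obtain ⟨S₀, c, hcard, hpair, hcol⟩ := hmono f
    refine ⟨S₀.image (fun u => (u, c)), ?_, ?_, ?_⟩
    · rw [Finset.card_image_of_injective _ (fun a b hab => (Prod.ext_iff.mp hab).1), hcard]
    · intro p hp
      obtain ⟨u, hu, rfl⟩ := Finset.mem_image.mp hp
      exact (hcol u hu).symm
    · intro p hp q hq
      obtain ⟨u, hu, rfl⟩ := Finset.mem_image.mp hp
      obtain ⟨v, hv, rfl⟩ := Finset.mem_image.mp hq
      rintro ⟨hlt, hX⟩
      have huv : u ≠ v := fun hcc => lt_irrefl _ (hcc ▸ hlt)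
      exact hX ⟨rfl, hpair u hu v hv huv⟩
  refine ⟨Λ × Fin k, inferInstance, E, ?_, ⟨?_, ?_⟩, ?_⟩
  · intro p hp
    exact lt_irrefl _ hp.1
  · obtain ⟨S, hcard, _, hst⟩ := build (fun _ => ⟨0, hk⟩)
    exact ⟨S, hcard, hst⟩
  · rintro m ⟨S, hcard, hst⟩
    rw [← hcard]
    exact stable_le S hst
  · intro P hP
    have hlev : ∀ i : Fin (k - 1), ∀ p ∈ P i, ∀ q ∈ P i, p ≠ q → e p.1 ≠ e q.1 := by
      intro i
      have hchain : (P i).Chain' (fun p q : Λ × Fin k => e p.1 < e q.1) :=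
        List.IsChain.imp (fun p q h => h.1) (hP i).2
      haveI : IsTrans (Λ × Fin k) (fun p q => e p.1 < e q.1) :=
        ⟨fun a b c h1 h2 => lt_trans h1 h2⟩
      have hpw := List.isChain_iff_pairwise.mp hchain
      have hpw' : (P i).Pairwise (fun p q : Λ × Fin k => e p.1 ≠ e q.1) :=
        hpw.imp (fun h => ne_of_lt h)
      exact fun p hp q hq hpq =>
        by haveI : Std.Symm (fun p q : Λ × Fin k => e p.1 ≠ e q.1) := ⟨fun a b hab => hab.symm⟩; exact hpw'.forall hp hq hpq
    set hits : Λ → Finset (Fin k) :=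
      fun u => Finset.univ.filter (fun a => ∃ i, (u, a) ∈ P i) with hhitsdef
    have hhits : ∀ u, (hits u).card < k := by
      intro u
      rcases Finset.eq_empty_or_nonempty (hits u) with hE' | hne
      · rw [hE']
        simpa using hk
      · obtain ⟨a₀, ha₀⟩ := hne
        obtain ⟨i₀, _⟩ := (Finset.mem_filter.mp ha₀).2
        have hkk : 0 < k - 1 := lt_of_le_of_lt (Nat.zero_le _) i₀.2
        have hle : (hits u).card ≤ k - 1 := by
          have hbound := Finset.card_le_card_of_injOn
            (f := fun a : Fin k =>
              if h : ∃ i : Fin (k - 1), (u, a) ∈ P i then h.choose else ⟨0, hkk⟩)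
            (s := hits u) (t := (Finset.univ : Finset (Fin (k - 1))))
            (fun a _ => Finset.mem_univ _) ?_
          · simpa using hbound
          · intro a ha b hb hab
            have hA := (Finset.mem_filter.mp (Finset.mem_coe.mp ha)).2
            have hB := (Finset.mem_filter.mp (Finset.mem_coe.mp hb)).2
            simp only at hab
            rw [dif_pos hA, dif_pos hB] at hab
            have h1 := hA.choose_spec
            have h2 := hB.choose_spec
            rw [hab] at h1
            by_contra hne
            have hne' : (u, a) ≠ (u, b) := fun hcc => hne (Prod.ext_iff.mp hcc).2
            exact hlev _ _ h1 _ h2 hne' rfl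
        omega
    have hfex : ∀ u : Λ, ∃ a : Fin k, a ∉ hits u := by
      intro u
      by_contra hcon
      push_neg at hcon
      have hsub : (Finset.univ : Finset (Fin k)) ⊆ hits u := fun a _ => hcon a
      have := Finset.card_le_card hsub
      rw [Finset.card_univ, Fintype.card_fin] at this
      exact absurd (lt_of_le_of_lt this (hhits u)) (lt_irrefl _)
    choose f hf using hfex
    constructor
    · obtain ⟨S, hcard, hsnd, hst⟩ := build f
      refine ⟨S, hcard, ?_, hst⟩
      intro v hv i hvP
      apply hf v.1
      rw [hhitsdef]
      refine Finset.mem_filter.mpr ⟨Finset.mem_univ _, ⟨i, ?_⟩⟩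
      have hv2 : v.2 = f v.1 := hsnd v hv
      have : (v.1, f v.1) = v := by rw [← hv2]
      rw [this]
      exact hvP
    · rintro m ⟨S, hcard, _, hst⟩
      rw [← hcard]
      exact stable_le S hst
end

section
/- For every positive integer k, there exist a positive integer N and a finite digraph D on N vertices whose stability number is exactly k, such that every set of at least ⌈N/k⌉ vertices of D contains a stable set of size k. -/
open Finset
noncomputable section ER
open scoped Classical
variable {k n M : ℕ}

def rng (f : Fin k → Fin n) : Finset (Fin n) := Finset.univ.image f

def cnt (U : Finset (Fin n)) (k : ℕ) : Finset (Fin k → Fin n) :=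
  Finset.univ.filter fun f => U ⊆ rng f

/-- vertices assigned to block b by ι -/
def Uset (W : Finset (Fin n)) (ι : ↥W.offDiag → Fin M) (b : Fin M) : Finset (Fin n) :=
  ((Finset.univ : Finset ↥W.offDiag).filter fun p => ι p = b).biUnion
    fun p => {(p : Fin n × Fin n).1, (p : Fin n × Fin n).2}

/-- event realizing ι -/
def Eset (W : Finset (Fin n)) (ι : ↥W.offDiag → Fin M) : Finset (Fin M → Fin k → Fin n) :=
  Fintype.piFinset (fun b => cnt (Uset W ι b) k)

lemma Uset_empty {W : Finset (Fin n)} {ι : ↥W.offDiag → Fin M} {b : Fin M}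
    (hb : b ∉ Finset.univ.image ι) : Uset W ι b = ∅ := by
  rw [Uset]
  have h : (Finset.univ : Finset ↥W.offDiag).filter (fun p => ι p = b) = ∅ := by
    ext p
    simp only [Finset.mem_filter, Finset.mem_univ, true_and, Finset.notMem_empty, iff_false]
    intro h
    exact hb (Finset.mem_image.2 ⟨p, Finset.mem_univ _, h⟩)
  rw [h, Finset.biUnion_empty]

lemma Uset_nonempty_card {W : Finset (Fin n)} {ι : ↥W.offDiag → Fin M} {b : Fin M}
    (hb : b ∈ Finset.univ.image ι) : 1 ≤ (Uset W ι b).card := by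
  obtain ⟨p, _, hp⟩ := Finset.mem_image.1 hb
  have h : (p : Fin n × Fin n).1 ∈ Uset W ι b := by
    rw [Uset]
    refine Finset.mem_biUnion.2 ⟨p, Finset.mem_filter.2 ⟨Finset.mem_univ _, hp⟩, by simp⟩
  exact Finset.card_pos.2 ⟨_, h⟩

/-- key combinatorial inequality : Σ_{b ∈ im ι} |U b| ≥ (k+1) + t -/
lemma sum_Uset_ge {W : Finset (Fin n)} (hW : W.card = k + 1) (hk : 0 < k)
    (ι : ↥W.offDiag → Fin M)
    (hU : ∀ b ∈ Finset.univ.image ι, (Uset W ι b).card ≤ k) :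
    k + 1 + (Finset.univ.image ι).card ≤ ∑ b ∈ Finset.univ.image ι, (Uset W ι b).card := by
  classical
  set T := Finset.univ.image ι with hT
  have hinj : W.offDiag.card ≤ (T.sigma (fun b => (Uset W ι b).offDiag)).card := by
    have h0 : ((Finset.univ : Finset ↥W.offDiag)).card
        ≤ (T.sigma (fun b => (Uset W ι b).offDiag)).card := by
      refine Finset.card_le_card_of_injOn
        (fun p => (⟨ι p, (p : Fin n × Fin n)⟩ : Σ _ : Fin M, Fin n × Fin n)) ?_ ?_
      · intro p _
        refine Finset.mem_sigma.2 ⟨Finset.mem_image.2 ⟨p, Finset.mem_univ _, rfl⟩, ?_⟩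
        have hp := p.2
        rw [Finset.mem_offDiag] at hp
        refine Finset.mem_offDiag.2 ⟨?_, ?_, hp.2.2⟩
        · rw [Uset]
          exact Finset.mem_biUnion.2 ⟨p, Finset.mem_filter.2 ⟨Finset.mem_univ _, rfl⟩, by simp⟩
        · rw [Uset]
          exact Finset.mem_biUnion.2 ⟨p, Finset.mem_filter.2 ⟨Finset.mem_univ _, rfl⟩, by simp⟩
      · intro p1 _ p2 _ h
        have h2 := congrArg (fun z : (Σ _ : Fin M, Fin n × Fin n) => z.2) h
        exact Subtype.ext h2
    calc W.offDiag.card = ((Finset.univ : Finset ↥W.offDiag)).card := by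
            rw [Finset.card_univ, Fintype.card_coe]
      _ ≤ _ := h0
  rw [Finset.card_sigma, Finset.offDiag_card, hW] at hinj
  -- now : (k+1)*(k+1) - (k+1) ≤ Σ_{b∈T} (u_b^2 - u_b)
  have hstep : ∀ b ∈ T, (Uset W ι b).offDiag.card ≤ k * ((Uset W ι b).card - 1) := by
    intro b hb
    rw [Finset.offDiag_card]
    have h1 := hU b hb
    have h2 := Uset_nonempty_card hb
    set u := (Uset W ι b).card
    have he : u * u - u = u * (u - 1) := by
      cases u with
      | zero => simp
      | succ m => simp [Nat.succ_sub_one, Nat.succ_mul, Nat.mul_succ]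
    rw [he]
    exact Nat.mul_le_mul_right _ h1
  have hsum1 : (k+1) * (k+1) - (k+1) ≤ ∑ b ∈ T, k * ((Uset W ι b).card - 1) :=
    hinj.trans (Finset.sum_le_sum hstep)
  rw [← Finset.mul_sum] at hsum1
  have hsum2 : k + 1 ≤ ∑ b ∈ T, ((Uset W ι b).card - 1) := by
    have h3 : (k+1) * (k+1) = k * (k+1) + (k+1) := by ring
    rw [h3] at hsum1
    have h4 : k * (k+1) + (k+1) - (k+1) = k * (k+1) := by omega
    rw [h4] at hsum1
    exact Nat.le_of_mul_le_mul_left hsum1 hk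
  have hsum3 : ∑ b ∈ T, (Uset W ι b).card
      = (∑ b ∈ T, ((Uset W ι b).card - 1)) + T.card := by
    have : ∀ b ∈ T, (Uset W ι b).card = ((Uset W ι b).card - 1) + 1 := by
      intro b hb
      have := Uset_nonempty_card (ι := ι) hb
      omega
    rw [Finset.sum_congr rfl this, Finset.sum_add_distrib, Finset.sum_const, smul_eq_mul, mul_one]
  omega

lemma cnt_le {U : Finset (Fin n)} (hk : 0 < k) :
    (cnt U k).card ≤ k ^ k * n ^ (k - U.card) := by
  by_cases hU : k < U.card
  · have hz : (cnt U k).card = 0 := by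
      rw [Finset.card_eq_zero]
      ext f
      simp only [cnt, Finset.mem_filter, Finset.mem_univ, true_and, Finset.notMem_empty,
        iff_false]
      intro hsub
      have h1 : U.card ≤ (rng f).card := Finset.card_le_card hsub
      have h2 : (rng f).card ≤ k := by
        refine (Finset.card_image_le).trans ?_
        simp
      omega
    rw [hz]; positivity
  push_neg at hU
  classical
  have hcover : cnt U k ⊆ (Finset.univ : Finset (↥U → Fin k)).biUnion
      (fun g => Finset.univ.filter fun f : Fin k → Fin n => ∀ x : ↥U, f (g x) = (x : Fin n)) := by
    intro f hf
    simp only [cnt, Finset.mem_filter, Finset.mem_univ, true_and] at hf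
    have hx : ∀ x : ↥U, ∃ i, f i = (x : Fin n) := by
      intro x
      have := hf x.2
      rw [rng, Finset.mem_image] at this
      obtain ⟨i, _, hi⟩ := this
      exact ⟨i, hi⟩
    refine Finset.mem_biUnion.2 ⟨fun x => Classical.choose (hx x), Finset.mem_univ _, ?_⟩
    exact Finset.mem_filter.2 ⟨Finset.mem_univ _, fun x => Classical.choose_spec (hx x)⟩
  refine (Finset.card_le_card hcover).trans ((Finset.card_biUnion_le).trans ?_)
  have hbound : ∀ g : ↥U → Fin k,
      (Finset.univ.filter fun f : Fin k → Fin n => ∀ x : ↥U, f (g x) = (x : Fin n)).card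
        ≤ n ^ (k - U.card) := by
    intro g
    by_cases hg : Function.Injective g
    · have himg : (Finset.univ.image g).card = U.card := by
        rw [Finset.card_image_of_injective _ hg, Finset.card_univ, Fintype.card_coe]
      have hle : (Finset.univ.filter fun f : Fin k → Fin n =>
            ∀ x : ↥U, f (g x) = (x : Fin n)).card
          ≤ (Finset.univ : Finset (↥((Finset.univ.image g)ᶜ : Finset (Fin k)) → Fin n)).card := by
        refine Finset.card_le_card_of_injOn (fun f => fun i => f (i : Fin k))
          (fun _ _ => Finset.mem_univ _) ?_
        intro f1 h1 f2 h2 heq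
        simp only [Finset.coe_filter, Set.mem_setOf_eq] at h1 h2
        funext i
        by_cases hi : i ∈ Finset.univ.image g
        · obtain ⟨x, _, hx⟩ := Finset.mem_image.1 hi
          rw [← hx, h1.2 x, h2.2 x]
        · have hmem : i ∈ (Finset.univ.image g)ᶜ := Finset.mem_compl.2 hi
          exact congrFun heq ⟨i, hmem⟩
      refine hle.trans ?_
      rw [Finset.card_univ, Fintype.card_fun, Fintype.card_coe, Fintype.card_fin,
        Finset.card_compl, Fintype.card_fin, himg]
    · have hempty : (Finset.univ.filter fun f : Fin k → Fin n =>
          ∀ x : ↥U, f (g x) = (x : Fin n)) = ∅ := by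
        rw [Function.not_injective_iff] at hg
        obtain ⟨x, y, hxy, hne⟩ := hg
        ext f
        simp only [Finset.mem_filter, Finset.notMem_empty, iff_false, not_and]
        intro _ hall
        have : (x : Fin n) = (y : Fin n) := by rw [← hall x, ← hall y, hxy]
        exact hne (Subtype.ext this)
      rw [hempty]; simp
  refine (Finset.sum_le_sum (fun g _ => hbound g)).trans ?_
  rw [Finset.sum_const, Finset.card_univ, Fintype.card_fun, Fintype.card_coe, Fintype.card_fin,
    smul_eq_mul]
  exact Nat.mul_le_mul_right _ (Nat.pow_le_pow_right hk hU)

/-- the per-ι bound -/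
lemma card_Eset_le {W : Finset (Fin n)} (hW : W.card = k + 1) (hk : 0 < k) (hn : 0 < n)
    (ι : ↥W.offDiag → Fin M) :
    (Eset (k := k) W ι).card
      ≤ k ^ (k * ((k+1)*(k+1))) * n ^ (k * M - ((k + 1) + (Finset.univ.image ι).card)) := by
  classical
  set T := Finset.univ.image ι with hT
  set t := T.card with htc
  rw [Eset, Fintype.card_piFinset]
  by_cases hz : ∃ b ∈ T, k < (Uset W ι b).card
  · obtain ⟨b0, hb0, hgt⟩ := hz
    have : (cnt (Uset W ι b0) k).card = 0 := by
      rw [Finset.card_eq_zero]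
      ext f
      simp only [cnt, Finset.mem_filter, Finset.mem_univ, true_and, Finset.notMem_empty,
        iff_false]
      intro hsub
      have h1 : (Uset W ι b0).card ≤ (rng f).card := Finset.card_le_card hsub
      have h2 : (rng f).card ≤ k := (Finset.card_image_le).trans (by simp)
      omega
    calc ∏ b, (cnt (Uset W ι b) k).card = 0 :=
          Finset.prod_eq_zero (Finset.mem_univ b0) this
      _ ≤ _ := Nat.zero_le _
  push_neg at hz
  -- split the product
  rw [← Finset.prod_mul_prod_compl T]
  have hout : ∀ b ∈ Tᶜ, (cnt (Uset W ι b) k).card = n ^ k := by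
    intro b hb
    have hU0 : Uset W ι b = ∅ := Uset_empty (Finset.mem_compl.1 hb)
    rw [hU0]
    have : cnt (∅ : Finset (Fin n)) k = Finset.univ := by
      ext f; simp [cnt]
    rw [this, Finset.card_univ, Fintype.card_fun, Fintype.card_fin, Fintype.card_fin]
  have hprod_out : ∏ b ∈ Tᶜ, (cnt (Uset W ι b) k).card = (n ^ k) ^ (M - t) := by
    rw [Finset.prod_congr rfl hout, Finset.prod_const, Finset.card_compl, Fintype.card_fin]
  have hprod_in : ∏ b ∈ T, (cnt (Uset W ι b) k).card
      ≤ (k ^ k) ^ t * n ^ (k * t - ∑ b ∈ T, (Uset W ι b).card) := by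
    calc ∏ b ∈ T, (cnt (Uset W ι b) k).card
        ≤ ∏ b ∈ T, (k ^ k * n ^ (k - (Uset W ι b).card)) :=
          Finset.prod_le_prod' (fun b _ => cnt_le hk)
      _ = (k ^ k) ^ t * n ^ (∑ b ∈ T, (k - (Uset W ι b).card)) := by
          rw [Finset.prod_mul_distrib, Finset.prod_const, Finset.prod_pow_eq_pow_sum]
      _ = (k ^ k) ^ t * n ^ (k * t - ∑ b ∈ T, (Uset W ι b).card) := by
          congr 1
          congr 1
          have h1 : ∑ b ∈ T, (k - (Uset W ι b).card) + ∑ b ∈ T, (Uset W ι b).card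
              = ∑ b ∈ T, k := by
            rw [← Finset.sum_add_distrib]
            refine Finset.sum_congr rfl ?_
            intro b hb
            have := hz b hb
            omega
          rw [Finset.sum_const, smul_eq_mul, mul_comm] at h1
          have hconv : k * T.card = k * t := rfl
          omega
  have hsum := sum_Uset_ge hW hk ι hz
  rw [← hT] at hsum
  -- combine
  have hsle : ∑ b ∈ T, (Uset W ι b).card ≤ k * t := by
    calc ∑ b ∈ T, (Uset W ι b).card ≤ ∑ b ∈ T, k := Finset.sum_le_sum (fun b hb => hz b hb)
      _ = k * t := by rw [Finset.sum_const, smul_eq_mul, mul_comm]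
  have htP : t ≤ (k+1)*(k+1) := by
    have h1 : t ≤ Fintype.card ↥W.offDiag := by
      rw [htc, hT]
      exact (Finset.card_image_le).trans (by rw [Finset.card_univ])
    have h2 : Fintype.card ↥W.offDiag = (k+1)*(k+1) - (k+1) := by
      rw [Fintype.card_coe, Finset.offDiag_card, hW]
    omega
  calc (∏ b ∈ T, (cnt (Uset W ι b) k).card) * ∏ b ∈ Tᶜ, (cnt (Uset W ι b) k).card
      ≤ ((k ^ k) ^ t * n ^ (k * t - ∑ b ∈ T, (Uset W ι b).card)) * (n ^ k) ^ (M - t) := by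
        rw [hprod_out]
        exact Nat.mul_le_mul_right _ hprod_in
    _ = (k ^ k) ^ t * n ^ ((k * t - ∑ b ∈ T, (Uset W ι b).card) + k * (M - t)) := by
        ring
    _ ≤ k ^ (k * ((k+1)*(k+1))) * n ^ (k * M - ((k + 1) + t)) := by
        have e1 : (k ^ k) ^ t ≤ k ^ (k * ((k+1)*(k+1))) := by
          rw [← pow_mul]
          exact Nat.pow_le_pow_right hk (Nat.mul_le_mul_left _ htP)
        have e2 : n ^ ((k * t - ∑ b ∈ T, (Uset W ι b).card) + k * (M - t))
            ≤ n ^ (k * M - ((k + 1) + t)) := by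
          refine Nat.pow_le_pow_right hn ?_
          have htM : t ≤ M := by
            rw [htc]
            exact (Finset.card_le_univ T).trans (by simp)
          have h5 : k * t ≤ k * M := Nat.mul_le_mul_left _ htM
          have h6 : k * (M - t) + k * t = k * M := by
            rw [← Nat.mul_add, Nat.sub_add_cancel htM]
          omega
        exact Nat.mul_le_mul e1 e2

def coB (ω : Fin M → Fin k → Fin n) (u v : Fin n) : Prop :=
  ∃ b i j, ω b i = u ∧ ω b j = v ∧ i ≠ j

def cov (ω : Fin M → Fin k → Fin n) (W : Finset (Fin n)) : Prop :=
  ∀ u ∈ W, ∀ v ∈ W, u ≠ v → coB ω u v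

/-- per-W bound on the number of ω covering W. -/
lemma card_cov_le {W : Finset (Fin n)} (hW : W.card = k + 1) (hk : 0 < k) (hn : 0 < n)
    (hM : 0 < M) :
    (Finset.univ.filter fun ω : Fin M → Fin k → Fin n => cov ω W).card
      ≤ ∑ t ∈ Finset.range ((k+1)*(k+1)+1),
          Nat.choose M t * (((k+1)*(k+1))^((k+1)*(k+1))
            * (k ^ (k * ((k+1)*(k+1))) * n ^ (k * M - ((k + 1) + t)))) := by
  classical
  set P' := (k+1)*(k+1) with hP'
  -- canonical choice of a block for each pair
  have hch : ∀ ω : Fin M → Fin k → Fin n, cov ω W → ∀ p : ↥W.offDiag,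
      ∃ b : Fin M, (p : Fin n × Fin n).1 ∈ rng (ω b) ∧ (p : Fin n × Fin n).2 ∈ rng (ω b) := by
    intro ω hω p
    have hp := p.2
    rw [Finset.mem_offDiag] at hp
    obtain ⟨b, i, j, hi, hj, _⟩ := hω _ hp.1 _ hp.2.1 hp.2.2
    exact ⟨b, by rw [rng, ← hi]; exact Finset.mem_image_of_mem _ (Finset.mem_univ _),
      by rw [rng, ← hj]; exact Finset.mem_image_of_mem _ (Finset.mem_univ _)⟩
  set io : (Fin M → Fin k → Fin n) → (↥W.offDiag → Fin M) := fun ω p =>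
    if h : cov ω W then Classical.choose (hch ω h p) else ⟨0, hM⟩ with hio
  have hreal : ∀ ω : Fin M → Fin k → Fin n, cov ω W → ω ∈ Eset (k := k) W (io ω) := by
    intro ω hω
    rw [Eset, Fintype.mem_piFinset]
    intro b
    simp only [cnt, Finset.mem_filter, Finset.mem_univ, true_and]
    intro x hx
    rw [Uset] at hx
    obtain ⟨p, hp1, hp2⟩ := Finset.mem_biUnion.1 hx
    have hb : io ω p = b := (Finset.mem_filter.1 hp1).2
    have hspec := Classical.choose_spec (hch ω hω p)
    rw [hio] at hb
    simp only [dif_pos hω] at hb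
    simp only [Finset.mem_insert, Finset.mem_singleton] at hp2
    rcases hp2 with h | h
    · subst h; rw [← hb]; exact hspec.1
    · subst h; rw [← hb]; exact hspec.2
  -- the big sigma target
  set target := (Finset.range (P'+1)).sigma (fun t =>
    (Finset.powersetCard t (Finset.univ : Finset (Fin M))).sigma (fun T =>
      ((Finset.univ : Finset (↥W.offDiag → Fin M)).filter
          (fun ι => Finset.univ.image ι = T)).sigma (fun ι =>
        Eset (k := k) W ι))) with htarget
  have hcard1 : (Finset.univ.filter fun ω : Fin M → Fin k → Fin n => cov ω W).card
      ≤ target.card := by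
    refine Finset.card_le_card_of_injOn
      (fun ω => ⟨(Finset.univ.image (io ω)).card, ⟨Finset.univ.image (io ω), ⟨io ω, ω⟩⟩⟩)
      ?_ ?_
    · intro ω hω
      rw [Finset.mem_coe, Finset.mem_filter] at hω
      rw [htarget]
      refine Finset.mem_sigma.2 ⟨?_, Finset.mem_sigma.2 ⟨?_, Finset.mem_sigma.2 ⟨?_, ?_⟩⟩⟩
      · rw [Finset.mem_range]
        have h1 : (Finset.univ.image (io ω)).card ≤ Fintype.card ↥W.offDiag :=
          (Finset.card_image_le).trans (by rw [Finset.card_univ])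
        have h2 : Fintype.card ↥W.offDiag = (k+1)*(k+1) - (k+1) := by
          rw [Fintype.card_coe, Finset.offDiag_card, hW]
        have h3 : (Finset.univ.image (io ω)).card ≤ P' := by
          rw [hP']
          exact (h1.trans h2.le).trans (Nat.sub_le _ _)
        exact Nat.lt_succ_of_le h3
      · exact Finset.mem_powersetCard.2 ⟨Finset.subset_univ _, rfl⟩
      · exact Finset.mem_filter.2 ⟨Finset.mem_univ _, rfl⟩
      · exact hreal ω hω.2
    · intro ω1 _ ω2 _ h
      exact congrArg (fun z : (Σ _ : ℕ, Σ _ : Finset (Fin M),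
        Σ _ : (↥W.offDiag → Fin M), (Fin M → Fin k → Fin n)) => z.2.2.2) h
  refine hcard1.trans ?_
  rw [htarget, Finset.card_sigma]
  refine Finset.sum_le_sum ?_
  intro t ht
  rw [Finset.card_sigma]
  have hinner : ∀ T ∈ Finset.powersetCard t (Finset.univ : Finset (Fin M)),
      (((Finset.univ : Finset (↥W.offDiag → Fin M)).filter
          (fun ι => Finset.univ.image ι = T)).sigma (fun ι => Eset (k := k) W ι)).card
        ≤ P' ^ P' * (k ^ (k * P') * n ^ (k * M - ((k + 1) + t))) := by
    intro T hT
    rw [Finset.card_sigma]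
    have hTt : T.card = t := (Finset.mem_powersetCard.1 hT).2
    have hEb : ∀ ι ∈ (Finset.univ : Finset (↥W.offDiag → Fin M)).filter
        (fun ι => Finset.univ.image ι = T),
        (Eset (k := k) W ι).card ≤ k ^ (k * P') * n ^ (k * M - ((k + 1) + t)) := by
      intro ι hι
      have him : Finset.univ.image ι = T := (Finset.mem_filter.1 hι).2
      have := card_Eset_le (M := M) hW hk hn ι
      rw [him, hTt] at this
      exact this
    calc ∑ ι ∈ (Finset.univ : Finset (↥W.offDiag → Fin M)).filter
            (fun ι => Finset.univ.image ι = T), (Eset (k := k) W ι).card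
        ≤ ∑ _ι ∈ (Finset.univ : Finset (↥W.offDiag → Fin M)).filter
            (fun ι => Finset.univ.image ι = T),
              (k ^ (k * P') * n ^ (k * M - ((k + 1) + t))) := Finset.sum_le_sum hEb
      _ = ((Finset.univ : Finset (↥W.offDiag → Fin M)).filter
            (fun ι => Finset.univ.image ι = T)).card
              * (k ^ (k * P') * n ^ (k * M - ((k + 1) + t))) := by
          rw [Finset.sum_const, smul_eq_mul]
      _ ≤ P' ^ P' * (k ^ (k * P') * n ^ (k * M - ((k + 1) + t))) := by
          refine Nat.mul_le_mul_right _ ?_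
          -- the number of ι with image T is at most t ^ |offDiag| ≤ P'^P'
          have hod : (W.offDiag).Nonempty := by
            rw [← Finset.card_pos, Finset.offDiag_card, hW]
            have h9 : (k+1) * (k+1) = (k+1) * k + (k+1) := by ring
            have h10 : 1 ≤ (k+1) * k := Nat.one_le_iff_ne_zero.2 (by positivity)
            omega
          rcases Finset.eq_empty_or_nonempty T with hTe | hTe
          · -- filter is empty
            have hfe : ((Finset.univ : Finset (↥W.offDiag → Fin M)).filter
                (fun ι => Finset.univ.image ι = T)) = ∅ := by
              ext ι
              simp only [Finset.mem_filter, Finset.mem_univ, true_and,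
                Finset.notMem_empty, iff_false]
              intro him
              obtain ⟨p0, hp0⟩ := hod
              have : ι ⟨p0, hp0⟩ ∈ Finset.univ.image ι :=
                Finset.mem_image_of_mem _ (Finset.mem_univ _)
              rw [him, hTe] at this
              exact absurd this (Finset.notMem_empty _)
            rw [hfe]
            simp
          · obtain ⟨b0, hb0⟩ := hTe
            have hmap : ((Finset.univ : Finset (↥W.offDiag → Fin M)).filter
                (fun ι => Finset.univ.image ι = T)).card
                  ≤ (Finset.univ : Finset (↥W.offDiag → ↥T)).card := by
              refine Finset.card_le_card_of_injOn
                (fun ι p => if h : ι p ∈ T then (⟨ι p, h⟩ : ↥T) else ⟨b0, hb0⟩) ?_ ?_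
              · intro ι _; exact Finset.mem_univ _
              · intro ι1 h1 ι2 h2 heq
                simp only [Finset.coe_filter, Set.mem_setOf_eq] at h1 h2
                funext p
                have hm1 : ι1 p ∈ T := by
                  rw [← h1.2]; exact Finset.mem_image_of_mem _ (Finset.mem_univ _)
                have hm2 : ι2 p ∈ T := by
                  rw [← h2.2]; exact Finset.mem_image_of_mem _ (Finset.mem_univ _)
                have heq' := congrFun heq p
                dsimp only at heq'
                rw [dif_pos hm1, dif_pos hm2] at heq'
                exact congrArg Subtype.val heq'
            refine hmap.trans ?_
            rw [Finset.card_univ, Fintype.card_fun, Fintype.card_coe, hTt]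
            have ht' : t ≤ P' := by
              rw [Finset.mem_range] at ht
              omega
            have hod' : Fintype.card ↥W.offDiag ≤ P' := by
              rw [Fintype.card_coe, Finset.offDiag_card, hW, hP']
              exact Nat.sub_le _ _
            have ht2 : t ≤ P' := by
              rw [Finset.mem_range] at ht
              omega
            calc t ^ Fintype.card ↥W.offDiag ≤ P' ^ Fintype.card ↥W.offDiag :=
                  Nat.pow_le_pow_left ht2 _
              _ ≤ P' ^ P' := Nat.pow_le_pow_right (by positivity) hod'
  refine (Finset.sum_le_sum hinner).trans ?_
  rw [Finset.sum_const, Finset.card_powersetCard, Finset.card_univ, Fintype.card_fin,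
    smul_eq_mul]


def goodT (S : Finset (Fin n)) (f : Fin k → Fin n) : Prop :=
  Function.Injective f ∧ ∀ i, f i ∈ S

lemma card_tup : (Finset.univ : Finset (Fin k → Fin n)).card = n ^ k := by
  rw [Finset.card_univ, Fintype.card_fun, Fintype.card_fin, Fintype.card_fin]

lemma card_goodT (S : Finset (Fin n)) :
    (Finset.univ.filter fun f : Fin k → Fin n => goodT S f).card
      = S.card.descFactorial k := by
  have h1 : (Finset.univ.filter fun f : Fin k → Fin n => goodT S f).card
      = Fintype.card {f : Fin k → Fin n // goodT S f} := by
    rw [Fintype.card_subtype]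
  rw [h1]
  have e : {f : Fin k → Fin n // goodT S f} ≃ (Fin k ↪ S) := by
    refine ⟨fun f => ⟨fun i => ⟨f.1 i, f.2.2 i⟩, fun i j h => f.2.1 (by simpa using h)⟩,
      fun g => ⟨fun i => (g i : Fin n), ⟨fun i j h => g.injective (by exact Subtype.ext h),
        fun i => (g i).2⟩⟩, ?_, ?_⟩
    · intro f; ext i; rfl
    · intro g; ext i; rfl
  rw [Fintype.card_congr e, Fintype.card_embedding_eq, Fintype.card_coe, Fintype.card_fin]

def allBad (S : Finset (Fin n)) (M : ℕ) : Finset (Fin M → Fin k → Fin n) :=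
  Fintype.piFinset (fun _ => Finset.univ.filter fun f : Fin k → Fin n => ¬ goodT S f)

lemma card_allBad (S : Finset (Fin n)) :
    (allBad (k := k) S M).card = (n ^ k - S.card.descFactorial k) ^ M := by
  rw [allBad, Fintype.card_piFinset]
  have h : (Finset.univ.filter fun f : Fin k → Fin n => ¬ goodT S f).card
      = n ^ k - S.card.descFactorial k := by
    have := Finset.card_filter_add_card_filter_not
      (s := (Finset.univ : Finset (Fin k → Fin n))) (fun f => goodT S f)
    rw [card_goodT, card_tup] at this
    omega
  simp [h, Finset.card_univ]

def Bad1 (k n M m₀ : ℕ) : Finset (Fin M → Fin k → Fin n) :=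
  Finset.univ.filter fun ω =>
    ∃ S ∈ Finset.powersetCard m₀ (Finset.univ : Finset (Fin n)), ∀ b, ¬ goodT S (ω b)

lemma card_bad1 (m₀ : ℕ) :
    (Bad1 k n M m₀).card ≤ Nat.choose n m₀ * (n ^ k - m₀.descFactorial k) ^ M := by
  have hsub : Bad1 k n M m₀
      ⊆ (Finset.powersetCard m₀ (Finset.univ : Finset (Fin n))).biUnion
          (fun S => allBad S M) := by
    intro ω hω
    rw [Bad1, Finset.mem_filter] at hω
    obtain ⟨_, S, hS, hbad⟩ := hω
    refine Finset.mem_biUnion.2 ⟨S, hS, ?_⟩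
    rw [allBad, Fintype.mem_piFinset]
    intro b
    exact Finset.mem_filter.2 ⟨Finset.mem_univ _, hbad b⟩
  refine (Finset.card_le_card hsub).trans ((Finset.card_biUnion_le).trans ?_)
  have h : ∀ S ∈ Finset.powersetCard m₀ (Finset.univ : Finset (Fin n)),
      (allBad (k := k) S M).card = (n ^ k - m₀.descFactorial k) ^ M := by
    intro S hS
    rw [card_allBad, (Finset.mem_powersetCard.1 hS).2]
  rw [Finset.sum_congr rfl h, Finset.sum_const, Finset.card_powersetCard,
    Finset.card_univ, Fintype.card_fin, smul_eq_mul]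

/-- number of covered (k+1)-sets -/
def Xcnt (ω : Fin M → Fin k → Fin n) : ℕ :=
  ((Finset.powersetCard (k+1) (Finset.univ : Finset (Fin n))).filter (fun W => cov ω W)).card

lemma sum_X_le (hk : 0 < k) (hn : 0 < n) (hM : 0 < M) :
    ∑ ω : Fin M → Fin k → Fin n, Xcnt ω
      ≤ Nat.choose n (k+1) * ∑ t ∈ Finset.range ((k+1)*(k+1)+1),
          Nat.choose M t * (((k+1)*(k+1))^((k+1)*(k+1))
            * (k ^ (k * ((k+1)*(k+1))) * n ^ (k * M - ((k + 1) + t)))) := by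
  classical
  have hswap : ∑ ω : Fin M → Fin k → Fin n, Xcnt ω
      = ∑ W ∈ Finset.powersetCard (k+1) (Finset.univ : Finset (Fin n)),
          (Finset.univ.filter fun ω : Fin M → Fin k → Fin n => cov ω W).card := by
    have h1 : ∀ ω : Fin M → Fin k → Fin n, Xcnt ω
        = ∑ W ∈ Finset.powersetCard (k+1) (Finset.univ : Finset (Fin n)),
            (if cov ω W then 1 else 0) := by
      intro ω
      rw [Xcnt, Finset.card_filter]
    rw [Finset.sum_congr rfl (fun ω _ => h1 ω), Finset.sum_comm]
    refine Finset.sum_congr rfl ?_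
    intro W _
    rw [Finset.card_filter]
  rw [hswap]
  have hbound : ∀ W ∈ Finset.powersetCard (k+1) (Finset.univ : Finset (Fin n)),
      (Finset.univ.filter fun ω : Fin M → Fin k → Fin n => cov ω W).card
        ≤ ∑ t ∈ Finset.range ((k+1)*(k+1)+1),
            Nat.choose M t * (((k+1)*(k+1))^((k+1)*(k+1))
              * (k ^ (k * ((k+1)*(k+1))) * n ^ (k * M - ((k + 1) + t)))) := by
    intro W hW
    exact card_cov_le (Finset.mem_powersetCard.1 hW).2 hk hn hM
  refine (Finset.sum_le_sum hbound).trans ?_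
  rw [Finset.sum_const, Finset.card_powersetCard, Finset.card_univ, Fintype.card_fin,
    smul_eq_mul]

/-- key numeric estimate, real side : the Bad1 count is < 1/4 of all ω -/
lemma bad1_quarter {n m₀ M k : ℕ} (hn2 : 2 ≤ n)
    (hI : n ^ k ≤ m₀.descFactorial k * (4*k) ^ k) (hIle : m₀.descFactorial k ≤ n ^ k)
    (hM : M = 2 * (4*k) ^ k * n) (hk : 0 < k) :
    4 * (Nat.choose n m₀ * (n ^ k - m₀.descFactorial k) ^ M) ≤ n ^ (k * M) := by
  have h4k : (0:ℝ) < ((4*k : ℕ) : ℝ) ^ k := by positivity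
  set q : ℝ := (((4*k : ℕ) : ℝ) ^ k)⁻¹ with hq
  have hq0 : 0 < q := by positivity
  have hq1 : q ≤ 1 := by
    rw [hq]
    rw [inv_le_one_iff₀]
    right
    have : (1:ℝ) ≤ ((4*k:ℕ):ℝ) := by
      have : (4:ℕ) ≤ 4*k := by omega
      have h2 : (1:ℕ) ≤ 4*k := by omega
      exact_mod_cast h2
    exact one_le_pow₀ this
  -- step: (n^k - I : ℝ) ≤ n^k * (1 - q)
  have hstep : ((n ^ k - m₀.descFactorial k : ℕ) : ℝ) ≤ (n:ℝ) ^ k * (1 - q) := by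
    have hcast : ((n ^ k - m₀.descFactorial k : ℕ) : ℝ)
        = (n:ℝ) ^ k - (m₀.descFactorial k : ℝ) := by
      rw [Nat.cast_sub hIle]
      push_cast
      ring
    rw [hcast]
    have hIq : (n:ℝ) ^ k * q ≤ (m₀.descFactorial k : ℝ) := by
      rw [hq, mul_inv_le_iff₀ h4k]
      exact_mod_cast hI
    nlinarith [hIq]
  -- (1-q)^M ≤ exp (-q*M)
  have hexp : ((n:ℝ) ^ k * (1 - q)) ^ M ≤ ((n:ℝ) ^ k) ^ M * Real.exp (-(q * M)) := by
    rw [mul_pow]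
    refine mul_le_mul_of_nonneg_left ?_ (by positivity)
    have h1q : (1 - q) ≤ Real.exp (-q) := by
      have := Real.add_one_le_exp (-q)
      linarith
    calc (1 - q) ^ M ≤ (Real.exp (-q)) ^ M := by
          refine pow_le_pow_left₀ (by linarith) h1q M
      _ = Real.exp (-(q * M)) := by
          rw [← Real.exp_nat_mul]
          ring_nf
  have hqM : q * M = 2 * n := by
    rw [hq, hM]
    push_cast
    field_simp
  -- choose ≤ 2^n
  have hchoose : (Nat.choose n m₀ : ℝ) ≤ (2:ℝ) ^ n := by
    have h1 : Nat.choose n m₀ ≤ 2 ^ n := by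
      calc Nat.choose n m₀ ≤ ∑ m ∈ Finset.range (n+1), Nat.choose n m := by
            by_cases hm : m₀ ≤ n
            · exact Finset.single_le_sum (f := fun m => Nat.choose n m)
                (fun _ _ => Nat.zero_le _) (Finset.mem_range.2 (by omega))
            · rw [Nat.choose_eq_zero_of_lt (by omega)]
              exact Nat.zero_le _
        _ = 2 ^ n := Nat.sum_range_choose n
    exact_mod_cast h1
  -- final: 4 * 2^n * exp(-2n) ≤ 1
  have hfin : (4:ℝ) * (2:ℝ) ^ n * Real.exp (-(2 * n)) ≤ 1 := by
    have he1 : (2:ℝ) ≤ Real.exp 1 := by have := Real.add_one_le_exp 1; linarith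
    have he2 : (4:ℝ) ≤ Real.exp 2 := by
      have h22 : Real.exp 2 = Real.exp 1 * Real.exp 1 := by
        rw [← Real.exp_add]; norm_num
      nlinarith
    have h2n : (4:ℝ) ≤ 2 ^ n := by
      calc (4:ℝ) = 2 ^ 2 := by norm_num
        _ ≤ 2 ^ n := pow_le_pow_right₀ (by norm_num) hn2
    have h4n : (4:ℝ) * (2:ℝ) ^ n ≤ (4:ℝ) ^ n := by
      have h44 : (4:ℝ) ^ n = (2:ℝ)^n * (2:ℝ)^n := by
        rw [← mul_pow]; norm_num
      nlinarith [pow_pos (show (0:ℝ) < 2 by norm_num) n]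
    have hen : (4:ℝ) ^ n ≤ Real.exp (2 * n) := by
      have hh : Real.exp (2 * (n:ℝ)) = (Real.exp 2) ^ n := by
        rw [← Real.exp_nat_mul]
        ring_nf
      rw [hh]
      exact pow_le_pow_left₀ (by norm_num) he2 n
    have hkey : (4:ℝ) * (2:ℝ) ^ n ≤ Real.exp (2 * n) := h4n.trans hen
    calc (4:ℝ) * (2:ℝ) ^ n * Real.exp (-(2 * n))
        ≤ Real.exp (2 * n) * Real.exp (-(2 * n)) :=
          mul_le_mul_of_nonneg_right hkey (Real.exp_nonneg _)
      _ = 1 := by rw [← Real.exp_add]; ring_nf; exact Real.exp_zero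
  -- assemble
  have hmain : (4:ℝ) * (Nat.choose n m₀ * ((n ^ k - m₀.descFactorial k : ℕ) : ℝ) ^ M)
      ≤ ((n:ℝ) ^ k) ^ M := by
    have h2 : ((n ^ k - m₀.descFactorial k : ℕ) : ℝ) ^ M ≤ ((n:ℝ) ^ k * (1 - q)) ^ M := by
      refine pow_le_pow_left₀ (by positivity) hstep M
    calc (4:ℝ) * (Nat.choose n m₀ * ((n ^ k - m₀.descFactorial k : ℕ) : ℝ) ^ M)
        ≤ 4 * ((2:ℝ)^n * (((n:ℝ) ^ k) ^ M * Real.exp (-(q * M)))) := by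
          refine mul_le_mul_of_nonneg_left ?_ (by norm_num)
          refine mul_le_mul hchoose (h2.trans hexp) (by positivity) (by positivity)
      _ = ((n:ℝ) ^ k) ^ M * ((4:ℝ) * (2:ℝ)^n * Real.exp (-(q * M))) := by ring
      _ ≤ ((n:ℝ) ^ k) ^ M * 1 := by
          refine mul_le_mul_of_nonneg_left ?_ (by positivity)
          rw [hqM]
          exact hfin
      _ = ((n:ℝ) ^ k) ^ M := by ring
  have hcast2 : ((n:ℝ) ^ k) ^ M = ((n ^ (k * M) : ℕ) : ℝ) := by
    push_cast
    rw [← pow_mul]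
  rw [hcast2] at hmain
  have : ((4 * (Nat.choose n m₀ * (n ^ k - m₀.descFactorial k) ^ M) : ℕ) : ℝ)
      ≤ ((n ^ (k * M) : ℕ) : ℝ) := by
    push_cast
    push_cast at hmain
    linarith
  exact_mod_cast this

lemma rhs_le {k n M : ℕ} (hk : 0 < k) (hn : 0 < n)
    (hMc : M = 2 * (4*k) ^ k * n)
    (hkM1 : (k+1) + ((k+1)*(k+1)) + ((k+1)*(k+1)) ≤ k * M) :
    Nat.choose n (k+1) * ∑ t ∈ Finset.range ((k+1)*(k+1)+1),
        Nat.choose M t * (((k+1)*(k+1))^((k+1)*(k+1))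
          * (k ^ (k * ((k+1)*(k+1))) * n ^ (k * M - ((k + 1) + t))))
      ≤ ((((k+1)*(k+1))+1) * (2*(4*k)^k)^((k+1)*(k+1)) * ((k+1)*(k+1))^((k+1)*(k+1))
          * k ^ (k * ((k+1)*(k+1)))) * n ^ (k * M) := by
  set P' := (k+1)*(k+1) with hP'
  set c := 2 * (4*k) ^ k with hc
  have hc1 : 1 ≤ c := by
    rw [hc]
    have : 1 ≤ (4*k) ^ k := Nat.one_le_pow _ _ (by omega)
    omega
  set A := k * M with hA
  have hterm : ∀ t ∈ Finset.range (P'+1),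
      Nat.choose M t * (P'^P' * (k ^ (k * P') * n ^ (A - ((k + 1) + t))))
        ≤ c^P' * P'^P' * k ^ (k * P') * n ^ (A - (k+1)) := by
    intro t ht
    rw [Finset.mem_range] at ht
    have ht' : t ≤ P' := by omega
    have h1 : Nat.choose M t ≤ c^t * n^t := by
      calc Nat.choose M t ≤ M.descFactorial t := Nat.choose_le_descFactorial _ _
        _ ≤ M ^ t := Nat.descFactorial_le_pow _ _
        _ = c^t * n^t := by rw [hMc, mul_pow]
    have h2 : c^t ≤ c^P' := Nat.pow_le_pow_right (by omega) ht'
    have h3 : n^t * n ^ (A - ((k + 1) + t)) = n ^ (A - (k+1)) := by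
      rw [← pow_add]
      congr 1
      omega
    calc Nat.choose M t * (P'^P' * (k ^ (k * P') * n ^ (A - ((k + 1) + t))))
        ≤ (c^t * n^t) * (P'^P' * (k ^ (k * P') * n ^ (A - ((k + 1) + t)))) :=
          Nat.mul_le_mul_right _ h1
      _ = c^t * P'^P' * k ^ (k * P') * (n^t * n ^ (A - ((k + 1) + t))) := by ring
      _ = c^t * P'^P' * k ^ (k * P') * n ^ (A - (k+1)) := by rw [h3]
      _ ≤ c^P' * P'^P' * k ^ (k * P') * n ^ (A - (k+1)) := by
          refine Nat.mul_le_mul_right _ ?_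
          exact Nat.mul_le_mul_right _ (Nat.mul_le_mul_right _ h2)
  have hsum : ∑ t ∈ Finset.range (P'+1),
      Nat.choose M t * (P'^P' * (k ^ (k * P') * n ^ (A - ((k + 1) + t))))
        ≤ (P'+1) * (c^P' * P'^P' * k ^ (k * P') * n ^ (A - (k+1))) := by
    calc ∑ t ∈ Finset.range (P'+1),
        Nat.choose M t * (P'^P' * (k ^ (k * P') * n ^ (A - ((k + 1) + t))))
        ≤ (Finset.range (P'+1)).card • (c^P' * P'^P' * k ^ (k * P') * n ^ (A - (k+1))) :=
          Finset.sum_le_card_nsmul _ _ _ hterm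
      _ = (P'+1) * (c^P' * P'^P' * k ^ (k * P') * n ^ (A - (k+1))) := by
          rw [Finset.card_range, smul_eq_mul]
  have hch : Nat.choose n (k+1) ≤ n ^ (k+1) := by
    calc Nat.choose n (k+1) ≤ n.descFactorial (k+1) := Nat.choose_le_descFactorial _ _
      _ ≤ n ^ (k+1) := Nat.descFactorial_le_pow _ _
  calc Nat.choose n (k+1) * ∑ t ∈ Finset.range (P'+1),
      Nat.choose M t * (P'^P' * (k ^ (k * P') * n ^ (A - ((k + 1) + t))))
      ≤ n ^ (k+1) * ((P'+1) * (c^P' * P'^P' * k ^ (k * P') * n ^ (A - (k+1)))) :=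
        Nat.mul_le_mul hch hsum
    _ = ((P'+1) * c^P' * P'^P' * k ^ (k * P')) * (n ^ (k+1) * n ^ (A - (k+1))) := by ring
    _ = ((P'+1) * c^P' * P'^P' * k ^ (k * P')) * n ^ A := by
        rw [← pow_add]
        congr 2
        omega

/-- Existence of a good configuration of blocks. -/
lemma exists_good (k : ℕ) (hk : 0 < k) :
    ∃ (n M m₀ : ℕ) (ω : Fin M → Fin k → Fin n),
      0 < m₀ ∧
      (∀ S ∈ Finset.powersetCard m₀ (Finset.univ : Finset (Fin n)), ∃ b, goodT S (ω b)) ∧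
      (k+1) * Xcnt ω + k * m₀ + 1 ≤ n := by
  classical
  set P' := (k+1)*(k+1) with hP'
  set c := 2 * (4*k) ^ k with hc
  set K₁ := (P'+1) * c^P' * P'^P' * k ^ (k * P') with hK₁
  set m₀ := 16 * k * (K₁ + k + 2) with hm₀
  set n := 2 * k * m₀ with hn
  set M := c * n with hM
  have hc1 : 1 ≤ c := by
    rw [hc]
    have : 1 ≤ (4*k) ^ k := Nat.one_le_pow _ _ (by omega)
    omega
  have hK1pos : 0 < K₁ := by
    rw [hK₁]
    have h1 : 0 < c^P' := Nat.pow_pos (by omega)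
    have h2 : 0 < P'^P' := Nat.pow_pos (by positivity)
    have h3 : 0 < k ^ (k*P') := Nat.pow_pos hk
    positivity
  have hm₀pos : 0 < m₀ := by rw [hm₀]; positivity
  have hnpos : 0 < n := by rw [hn]; positivity
  have hn2 : 2 ≤ n := by
    have he : n = 2 * (k * m₀) := by rw [hn]; ring
    have h1 : 1 ≤ k * m₀ := Nat.one_le_iff_ne_zero.2 (by positivity)
    omega
  have hMpos : 0 < M := by rw [hM]; positivity
  have hm₀k : 2 * k ≤ m₀ := by
    rw [hm₀]
    calc 2 * k ≤ 16 * k * 1 := by omega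
      _ ≤ 16 * k * (K₁ + k + 2) := Nat.mul_le_mul_left _ (by omega)
  -- the descFactorial lower bound
  have hI : n ^ k ≤ m₀.descFactorial k * (4*k) ^ k := by
    have h1 : (m₀ - k) ^ k ≤ m₀.descFactorial k := by
      have := Nat.pow_sub_le_descFactorial m₀ k
      have h2 : m₀ - k ≤ m₀ + 1 - k := by omega
      exact (Nat.pow_le_pow_left h2 k).trans this
    have h2 : n ≤ (m₀ - k) * (4 * k) := by
      have e1 : (m₀ - k) * (4 * k) = m₀ * (4 * k) - k * (4 * k) :=
        Nat.sub_mul _ _ _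
      have e2 : k * k * 4 ≤ k * m₀ * 2 := by
        have : k * (2 * k) ≤ k * m₀ := Nat.mul_le_mul_left _ hm₀k
        calc k * k * 4 = k * (2 * k) * 2 := by ring
          _ ≤ k * m₀ * 2 := Nat.mul_le_mul_right _ this
      have e3 : m₀ * (4 * k) = k * m₀ * 4 := by ring
      have e4 : k * (4 * k) = k * k * 4 := by ring
      rw [hn, e1, e3, e4]
      have : 2 * k * m₀ = k * m₀ * 2 := by ring
      omega
    calc n ^ k ≤ ((m₀ - k) * (4 * k)) ^ k := Nat.pow_le_pow_left h2 k
      _ = (m₀ - k) ^ k * (4 * k) ^ k := mul_pow _ _ _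
      _ ≤ m₀.descFactorial k * (4*k) ^ k := Nat.mul_le_mul_right _ h1
  have hIle : m₀.descFactorial k ≤ n ^ k := by
    calc m₀.descFactorial k ≤ m₀ ^ k := Nat.descFactorial_le_pow _ _
      _ ≤ n ^ k := by
        refine Nat.pow_le_pow_left ?_ k
        rw [hn]
        calc m₀ = 1 * m₀ := (one_mul _).symm
          _ ≤ 2 * k * m₀ := Nat.mul_le_mul_right _ (by omega)
  -- Bad1 bound
  have hbad1 : 4 * (Bad1 k n M m₀).card ≤ n ^ (k * M) := by
    have h1 := card_bad1 (k := k) (n := n) (M := M) m₀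
    have h2 := bad1_quarter (n := n) (m₀ := m₀) (M := M) (k := k) hn2 hI hIle (by rw [hM]) hk
    calc 4 * (Bad1 k n M m₀).card
        ≤ 4 * (Nat.choose n m₀ * (n ^ k - m₀.descFactorial k) ^ M) := by omega
      _ ≤ n ^ (k * M) := h2
  -- Bad2 bound
  have hkM1 : (k+1) + P' + P' ≤ k * M := by
    have h1 : k * M = k * c * n := by rw [hM]; ring
    have h2 : n ≤ k * c * n := by
      calc n = 1 * n := (one_mul _).symm
        _ ≤ k * c * n := Nat.mul_le_mul_right _ (by
            calc 1 = 1 * 1 := rfl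
              _ ≤ k * c := Nat.mul_le_mul hk hc1)
    have h3 : (k+1) + P' + P' ≤ n := by
      rw [hn, hm₀]
      have hP4 : P' = (k+1)*(k+1) := hP'
      have hkK : P' ≤ K₁ := by
        rw [hK₁]
        calc P' ≤ P' + 1 := by omega
          _ = (P'+1) * 1 := (mul_one _).symm
          _ ≤ (P'+1) * c^P' := Nat.mul_le_mul_left _ (Nat.one_le_pow _ _ (by omega))
          _ = (P'+1) * c^P' * 1 := (mul_one _).symm
          _ ≤ (P'+1) * c^P' * P'^P' := Nat.mul_le_mul_left _ (Nat.one_le_pow _ _ (by positivity))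
          _ = (P'+1) * c^P' * P'^P' * 1 := (mul_one _).symm
          _ ≤ K₁ := by rw [hK₁]; exact Nat.mul_le_mul_left _ (Nat.one_le_pow _ _ hk)
      -- n = 2k·16k(K₁+k+2) ≥ 64 K₁ ≥ ...
      have h5 : 2 * k * (16 * k * (K₁ + k + 2)) ≥ 32 * (K₁ + k + 2) := by
        have : 1 ≤ k * k := Nat.one_le_iff_ne_zero.2 (by positivity)
        calc 2 * k * (16 * k * (K₁ + k + 2)) = 32 * (k * k) * (K₁ + k + 2) := by ring
          _ ≥ 32 * 1 * (K₁ + k + 2) := by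
              exact Nat.mul_le_mul_right _ (Nat.mul_le_mul_left _ this)
          _ = 32 * (K₁ + k + 2) := by ring
      have hP'k : (k+1) ≤ K₁ + k + 2 := by omega
      have hPP : P' ≤ K₁ + k + 2 := by omega
      omega
    omega
  have hsumX : ∑ ω : Fin M → Fin k → Fin n, Xcnt ω ≤ K₁ * n ^ (k * M) := by
    refine (sum_X_le hk hnpos hMpos).trans ?_
    have := rhs_le (k := k) (n := n) (M := M) hk hnpos (by rw [hM]) hkM1
    rw [hK₁]
    exact this
  set Bad2 := (Finset.univ.filter fun ω : Fin M → Fin k → Fin n => 4 * K₁ ≤ Xcnt ω)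
    with hBad2
  have hbad2 : 4 * Bad2.card ≤ n ^ (k * M) := by
    have h1 : Bad2.card • (4 * K₁) ≤ ∑ ω ∈ Bad2, Xcnt ω :=
      Finset.card_nsmul_le_sum _ _ _ (fun ω hω => (Finset.mem_filter.1 hω).2)
    have h2 : ∑ ω ∈ Bad2, Xcnt ω ≤ ∑ ω : Fin M → Fin k → Fin n, Xcnt ω :=
      Finset.sum_le_sum_of_subset (Finset.filter_subset _ _)
    have h3 : Bad2.card * (4 * K₁) ≤ K₁ * n ^ (k * M) := by
      rw [← smul_eq_mul]
      exact (h1.trans h2).trans hsumX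
    have h4 : (4 * Bad2.card) * K₁ ≤ n ^ (k * M) * K₁ := by
      calc (4 * Bad2.card) * K₁ = Bad2.card * (4 * K₁) := by ring
        _ ≤ K₁ * n ^ (k * M) := h3
        _ = n ^ (k * M) * K₁ := by ring
    exact Nat.le_of_mul_le_mul_right h4 hK1pos
  -- pick a good ω
  have hcardOm : Fintype.card (Fin M → Fin k → Fin n) = n ^ (k * M) := by
    rw [Fintype.card_fun, Fintype.card_fun, Fintype.card_fin, Fintype.card_fin,
      Fintype.card_fin, ← pow_mul]
  have hex : ∃ ω : Fin M → Fin k → Fin n, ω ∉ Bad1 k n M m₀ ∧ ω ∉ Bad2 := by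
    by_contra hcon
    push_neg at hcon
    have hsub : (Finset.univ : Finset (Fin M → Fin k → Fin n)) ⊆ Bad1 k n M m₀ ∪ Bad2 := by
      intro ω _
      rcases Classical.em (ω ∈ Bad1 k n M m₀) with h | h
      · exact Finset.mem_union_left _ h
      · exact Finset.mem_union_right _ (hcon ω h)
    have h1 : n ^ (k * M) ≤ (Bad1 k n M m₀).card + Bad2.card := by
      calc n ^ (k * M) = Fintype.card (Fin M → Fin k → Fin n) := hcardOm.symm
        _ = (Finset.univ : Finset (Fin M → Fin k → Fin n)).card := (Finset.card_univ).symm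
        _ ≤ (Bad1 k n M m₀ ∪ Bad2).card := Finset.card_le_card hsub
        _ ≤ _ := Finset.card_union_le _ _
    have h2 : 0 < n ^ (k * M) := Nat.pow_pos hnpos
    omega
  obtain ⟨ω, hω1, hω2⟩ := hex
  refine ⟨n, M, m₀, ω, hm₀pos, ?_, ?_⟩
  · -- covering property
    intro S hS
    by_contra hcon
    push_neg at hcon
    exact hω1 (Finset.mem_filter.2 ⟨Finset.mem_univ _, S, hS, hcon⟩)
  · -- deletion budget
    have hX : Xcnt ω < 4 * K₁ := by
      by_contra hcon
      push_neg at hcon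
      exact hω2 (Finset.mem_filter.2 ⟨Finset.mem_univ _, hcon⟩)
    have hbound : (k+1) * Xcnt ω ≤ (k+1) * (4 * K₁) := Nat.mul_le_mul_left _ (by omega)
    have hkey : (k+1) * (4 * K₁) + k * m₀ + 1 ≤ n := by
      rw [hn, hm₀]
      have h1 : (k+1) * (4 * K₁) ≤ 8 * k * K₁ := by
        have : k + 1 ≤ 2 * k := by omega
        calc (k+1) * (4 * K₁) ≤ (2*k) * (4 * K₁) := Nat.mul_le_mul_right _ this
          _ = 8 * k * K₁ := by ring
      have h2 : 2 * k * (16 * k * (K₁ + k + 2)) = 32 * (k*k) * (K₁ + k + 2) := by ring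
      have h3 : k * (16 * k * (K₁ + k + 2)) = 16 * (k*k) * (K₁ + k + 2) := by ring
      have hkk : 1 ≤ k * k := Nat.one_le_iff_ne_zero.2 (by positivity)
      have h4 : 8 * k * K₁ ≤ 8 * (k*k) * K₁ := by
        have : 8 * k ≤ 8 * (k * k) := by
          calc 8 * k = 8 * (k * 1) := by ring
            _ ≤ 8 * (k * k) := Nat.mul_le_mul_left _ (Nat.mul_le_mul_left _ hk)
        exact Nat.mul_le_mul_right _ this
      have h5 : 8 * (k*k) * K₁ + 16 * (k*k) * (K₁ + k + 2) + 1 ≤ 32 * (k*k) * (K₁ + k + 2) := by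
        have e1 : 32 * (k*k) * (K₁ + k + 2) = 16 * (k*k) * (K₁ + k + 2) + 16 * (k*k) * (K₁ + k + 2) := by ring
        have e2 : 8 * (k*k) * K₁ ≤ 16 * (k*k) * (K₁ + k + 2) := by
          refine Nat.mul_le_mul ?_ (by omega)
          exact Nat.mul_le_mul_right _ (by omega)
        have e3 : 1 ≤ 16 * (k*k) * (K₁ + k + 2) - 8 * (k*k) * K₁ := by
          have : 8 * (k*k) * K₁ + 16 * (k*k) ≤ 16 * (k*k) * (K₁ + k + 2) := by
            calc 8 * (k*k) * K₁ + 16 * (k*k) ≤ 16 * (k*k) * K₁ + 16 * (k*k) := by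
                  refine Nat.add_le_add_right ?_ _
                  exact Nat.mul_le_mul_right _ (Nat.mul_le_mul_right _ (by omega))
              _ = 16 * (k*k) * (K₁ + 1) := by ring
              _ ≤ 16 * (k*k) * (K₁ + k + 2) := Nat.mul_le_mul_left _ (by omega)
          omega
        omega
      omega
    omega

end ER

/-- For every positive integer `k`, there exist a positive integer `N` and a digraph on `N`
vertices with stability number exactly `k`, such that every set of at least `⌈N/k⌉` vertices
contains a stable set of size `k`. -/
theorem exists_digraph_large_sets_contain_stable (k : ℕ) (hk : 0 < k) :
    ∃ N : ℕ, 0 < N ∧ ∃ E : Fin N → Fin N → Prop,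
      Irreflexive E ∧
      IsGreatest {m : ℕ | ∃ S : Finset (Fin N), S.card = m ∧ ∀ u ∈ S, ∀ v ∈ S, ¬ E u v} k ∧
      ∀ T : Finset (Fin N), ⌈(N : ℚ) / (k : ℚ)⌉₊ ≤ T.card →
        ∃ S ⊆ T, S.card = k ∧ ∀ u ∈ S, ∀ v ∈ S, ¬ E u v := by
  classical
  obtain ⟨n, M, m₀, ω, hm₀pos, hcov_prop, hbudget⟩ := exists_good k hk
  -- deletion set
  set D : Finset (Fin n) := ((Finset.powersetCard (k+1) (Finset.univ : Finset (Fin n))).filter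
      (fun W => cov ω W)).biUnion id with hD
  have hDcard : D.card ≤ (k+1) * Xcnt ω := by
    rw [hD]
    refine (Finset.card_biUnion_le).trans ?_
    have h1 : ∀ W ∈ (Finset.powersetCard (k+1) (Finset.univ : Finset (Fin n))).filter
        (fun W => cov ω W), (id W : Finset (Fin n)).card = k + 1 := by
      intro W hW
      exact (Finset.mem_powersetCard.1 (Finset.mem_filter.1 hW).1).2
    rw [Finset.sum_congr rfl h1, Finset.sum_const, smul_eq_mul]
    rw [Xcnt, mul_comm]
  set V' : Finset (Fin n) := (Finset.univ : Finset (Fin n)) \ D with hV'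
  set N := V'.card with hN
  have hNcard : N = n - D.card := by
    rw [hN, hV', Finset.card_sdiff_of_subset (Finset.subset_univ _), Finset.card_univ, Fintype.card_fin]
  have hN1 : k * m₀ + 1 ≤ N := by
    have h1 : D.card ≤ (k+1) * Xcnt ω := hDcard
    omega
  have hNpos : 0 < N := by
    have : 1 ≤ k * m₀ := Nat.one_le_iff_ne_zero.2 (by positivity)
    omega
  -- the equivalence
  set e := V'.equivFin with he
  set f : Fin N → Fin n := fun a => ((e.symm a : ↥V') : Fin n) with hf
  have hf_inj : Function.Injective f := by
    intro a b hab
    have := Subtype.ext hab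
    exact e.symm.injective this
  have hf_mem : ∀ a, f a ∈ V' := fun a => (e.symm a).2
  -- main helper: every m₀-sized subset of Fin N contains a stable k-set
  have hstage : ∀ T : Finset (Fin N), m₀ ≤ T.card →
      ∃ S ⊆ T, S.card = k ∧ ∀ u ∈ S, ∀ v ∈ S, ¬ (u ≠ v ∧ ¬ coB ω (f u) (f v)) := by
    intro T hT
    have hT' : m₀ ≤ (T.image f).card := by
      rw [Finset.card_image_of_injective _ hf_inj]; exact hT
    obtain ⟨S₀, hS₀sub, hS₀card⟩ := Finset.exists_subset_card_eq hT'
    obtain ⟨b, hb⟩ := hcov_prop S₀ (Finset.mem_powersetCard.2 ⟨Finset.subset_univ _, hS₀card⟩)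
    set B := Finset.univ.image (ω b) with hB
    have hBsub : B ⊆ S₀ := by
      intro x hx
      obtain ⟨i, _, hi⟩ := Finset.mem_image.1 hx
      rw [← hi]; exact hb.2 i
    have hBcard : B.card = k := by
      rw [hB, Finset.card_image_of_injective _ hb.1, Finset.card_univ, Fintype.card_fin]
    set S := T.filter (fun a => f a ∈ B) with hS
    have hSsub : S ⊆ T := Finset.filter_subset _ _
    have himg : S.image f = B := by
      apply Finset.Subset.antisymm
      · intro x hx
        obtain ⟨a, ha, hax⟩ := Finset.mem_image.1 hx
        rw [← hax]; exact (Finset.mem_filter.1 ha).2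
      · intro x hx
        have hx2 : x ∈ T.image f := hS₀sub (hBsub hx)
        obtain ⟨a, ha, hax⟩ := Finset.mem_image.1 hx2
        refine Finset.mem_image.2 ⟨a, ?_, hax⟩
        exact Finset.mem_filter.2 ⟨ha, by rw [hax]; exact hx⟩
    have hScard : S.card = k := by
      rw [← hBcard, ← himg, Finset.card_image_of_injective _ hf_inj]
    refine ⟨S, hSsub, hScard, ?_⟩
    intro u hu v hv hcon
    obtain ⟨hne, hnc⟩ := hcon
    have hu' : f u ∈ B := (Finset.mem_filter.1 hu).2
    have hv' : f v ∈ B := (Finset.mem_filter.1 hv).2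
    obtain ⟨i, _, hi⟩ := Finset.mem_image.1 hu'
    obtain ⟨j, _, hj⟩ := Finset.mem_image.1 hv'
    apply hnc
    refine ⟨b, i, j, hi, hj, ?_⟩
    intro hij
    apply hne
    apply hf_inj
    rw [← hi, ← hj, hij]
  -- no stable set of size more than k
  have hno_big : ∀ S : Finset (Fin N),
      (∀ u ∈ S, ∀ v ∈ S, ¬ (u ≠ v ∧ ¬ coB ω (f u) (f v))) → S.card ≤ k := by
    intro S hSstable
    by_contra hcon
    push_neg at hcon
    obtain ⟨S₁, hS₁sub, hS₁card⟩ := Finset.exists_subset_card_eq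
      (show k+1 ≤ S.card by omega)
    set W := S₁.image f with hW
    have hWcard : W.card = k+1 := by
      rw [hW, Finset.card_image_of_injective _ hf_inj, hS₁card]
    have hWcov : cov ω W := by
      intro u hu v hv huv
      obtain ⟨a, ha, hau⟩ := Finset.mem_image.1 hu
      obtain ⟨a', ha', hav⟩ := Finset.mem_image.1 hv
      have hne : a ≠ a' := by
        rintro rfl
        apply huv
        rw [← hau, ← hav]
      have h1 := hSstable a (hS₁sub ha) a' (hS₁sub ha')
      rw [not_and, not_not] at h1
      have hcob := h1 hne
      rw [hau, hav] at hcob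
      exact hcob
    have hWD : W ⊆ D := by
      rw [hD]
      refine Finset.subset_biUnion_of_mem id ?_
      exact Finset.mem_filter.2
        ⟨Finset.mem_powersetCard.2 ⟨Finset.subset_univ _, hWcard⟩, hWcov⟩
    have hWne : W.Nonempty := by
      rw [← Finset.card_pos, hWcard]; omega
    obtain ⟨x, hx⟩ := hWne
    obtain ⟨a, _, hax⟩ := Finset.mem_image.1 hx
    have h1 : x ∈ V' := by rw [← hax]; exact hf_mem a
    have h2 : x ∈ D := hWD hx
    rw [hV', Finset.mem_sdiff] at h1
    exact h1.2 h2
  -- the digraph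
  refine ⟨N, hNpos, fun a b => a ≠ b ∧ ¬ coB ω (f a) (f b), ?_, ?_, ?_⟩
  · intro a ha
    exact ha.1 rfl
  · constructor
    · -- k is attained
      have hm₀N : m₀ ≤ (Finset.univ : Finset (Fin N)).card := by
        rw [Finset.card_univ, Fintype.card_fin]
        have : m₀ ≤ k * m₀ := by
          calc m₀ = 1 * m₀ := (one_mul _).symm
            _ ≤ k * m₀ := Nat.mul_le_mul_right _ hk
        omega
      obtain ⟨S, _, hScard, hSstab⟩ := hstage Finset.univ hm₀N
      exact ⟨S, hScard, hSstab⟩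
    · intro m hm
      obtain ⟨S, hScard, hSstab⟩ := hm
      rw [← hScard]
      exact hno_big S hSstab
  · intro T hTc
    have h1 : (m₀ : ℚ) ≤ (N : ℚ) / (k : ℚ) := by
      rw [le_div_iff₀ (by exact_mod_cast hk)]
      have h2 : m₀ * k ≤ N := by
        have := hN1
        calc m₀ * k = k * m₀ := by ring
          _ ≤ N := by omega
      exact_mod_cast h2
    have h2 : m₀ ≤ ⌈(N : ℚ) / (k : ℚ)⌉₊ := by
      calc m₀ = ⌈(m₀ : ℚ)⌉₊ := (Nat.ceil_natCast m₀).symm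
        _ ≤ ⌈(N : ℚ) / (k : ℚ)⌉₊ := Nat.ceil_mono h1
    exact hstage T (h2.trans hTc)
end

section
/- For every integer k ≥ 3 and every integer n ≥ 2^{15k²}, with p = 20·n^{-2/k} one has ∑_{i=2}^{k-1} \binom{n}{i}\binom{n-i}{k-i}\binom{n-k}{k-i}·p^{k(k-1)-\binom{i}{2}} ≤ k·20^{k²}·n^{2/k}. (This sum is the quantity Δ = ∑ Pr[B_S ∩ B_T] over ordered pairs of k-element vertex subsets S, T with |S ∩ T| ≥ 2, where B_S is the event that S is a clique in G(n,p).) -/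
/-- For `k ≥ 3`, `n ≥ 2^(15k²)` and `p = 20 n^(-2/k)`, the quantity
`Δ = ∑_{i=2}^{k-1} C(n,i) C(n-i,k-i) C(n-k,k-i) p^(k(k-1) - C(i,2))`
is at most `k · 20^(k²) · n^(2/k)`. -/
theorem delta_le (k n : ℕ) (hk : 3 ≤ k) (hn : 2 ^ (15 * k ^ 2) ≤ n) :
    ∑ i ∈ Finset.Icc 2 (k - 1),
      ((n.choose i * (n - i).choose (k - i) * (n - k).choose (k - i) : ℕ) : ℝ) *
        (20 * (n : ℝ) ^ (-(2 : ℝ) / (k : ℝ))) ^ (k * (k - 1) - i.choose 2)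
      ≤ (k : ℝ) * 20 ^ (k ^ 2) * (n : ℝ) ^ ((2 : ℝ) / (k : ℝ)) := by
  have hn1 : 1 ≤ n := le_trans Nat.one_le_two_pow hn
  have hN1 : (1:ℝ) ≤ (n:ℝ) := by exact_mod_cast hn1
  have hN0 : (0:ℝ) < (n:ℝ) := by linarith
  have hK3 : (3:ℝ) ≤ (k:ℝ) := by exact_mod_cast hk
  have hK0 : (0:ℝ) < (k:ℝ) := by linarith
  have key : ∀ i ∈ Finset.Icc 2 (k-1),
      ((n.choose i * (n - i).choose (k - i) * (n - k).choose (k - i) : ℕ) : ℝ) *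
        (20 * (n : ℝ) ^ (-(2 : ℝ) / (k : ℝ))) ^ (k * (k - 1) - i.choose 2)
      ≤ (20:ℝ) ^ (k ^ 2) * (n : ℝ) ^ ((2 : ℝ) / (k : ℝ)) := by
    intro i hi
    rw [Finset.mem_Icc] at hi
    obtain ⟨hi2, hik⟩ := hi
    have hik' : i ≤ k := le_trans hik (Nat.sub_le _ _)
    set e := k * (k - 1) - i.choose 2 with he
    have hc2 : i.choose 2 ≤ k * (k - 1) := by
      calc i.choose 2 ≤ i ^ 2 := Nat.choose_le_pow i 2
        _ = i * i := sq i
        _ ≤ (k - 1) * k := Nat.mul_le_mul hik hik'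
        _ = k * (k - 1) := mul_comm _ _
    have heK : e ≤ k ^ 2 := by
      have : k * (k - 1) ≤ k ^ 2 := by
        have : k - 1 ≤ k := Nat.sub_le _ _
        calc k * (k-1) ≤ k * k := Nat.mul_le_mul_left _ this
          _ = k ^ 2 := (sq k).symm
      omega
    -- binomial bound
    have hbin : (n.choose i * (n - i).choose (k - i) * (n - k).choose (k - i) : ℕ)
        ≤ n ^ (2 * k - i) := by
      have h1 : n.choose i ≤ n ^ i := Nat.choose_le_pow n i
      have h2 : (n - i).choose (k - i) ≤ n ^ (k - i) :=
        le_trans (Nat.choose_le_pow _ _) (Nat.pow_le_pow_left (Nat.sub_le _ _) _)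
      have h3 : (n - k).choose (k - i) ≤ n ^ (k - i) :=
        le_trans (Nat.choose_le_pow _ _) (Nat.pow_le_pow_left (Nat.sub_le _ _) _)
      calc n.choose i * (n - i).choose (k - i) * (n - k).choose (k - i)
          ≤ n ^ i * n ^ (k - i) * n ^ (k - i) := by
            exact Nat.mul_le_mul (Nat.mul_le_mul h1 h2) h3
        _ = n ^ (2 * k - i) := by rw [← pow_add, ← pow_add]; congr 1; omega
    have hp0 : (0:ℝ) ≤ 20 * (n : ℝ) ^ (-(2 : ℝ) / (k : ℝ)) := by positivity
    have hstep : ((n.choose i * (n - i).choose (k - i) * (n - k).choose (k - i) : ℕ) : ℝ) *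
        (20 * (n : ℝ) ^ (-(2 : ℝ) / (k : ℝ))) ^ e
        ≤ ((n:ℝ) ^ (2*k - i)) * ((20:ℝ) ^ e * (n : ℝ) ^ ((-(2 : ℝ) / (k : ℝ)) * e)) := by
      have h1 : ((n.choose i * (n - i).choose (k - i) * (n - k).choose (k - i) : ℕ) : ℝ)
          ≤ (n:ℝ) ^ (2*k - i) := by exact_mod_cast hbin
      have h2 : (20 * (n : ℝ) ^ (-(2 : ℝ) / (k : ℝ))) ^ e
          = (20:ℝ) ^ e * (n : ℝ) ^ ((-(2 : ℝ) / (k : ℝ)) * e) := by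
        rw [mul_pow, ← Real.rpow_natCast ((n:ℝ) ^ (-(2 : ℝ) / (k : ℝ))) e,
          ← Real.rpow_mul (le_of_lt hN0)]
      rw [h2]
      exact mul_le_mul_of_nonneg_right h1 (by positivity)
    refine le_trans hstep ?_
    have hrw : ((n:ℝ) ^ (2*k - i)) * ((20:ℝ) ^ e * (n : ℝ) ^ ((-(2 : ℝ) / (k : ℝ)) * e))
        = (20:ℝ) ^ e * (n:ℝ) ^ (((2*k - i : ℕ):ℝ) + (-(2 : ℝ) / (k : ℝ)) * e) := by
      rw [Real.rpow_add hN0, ← Real.rpow_natCast (n:ℝ) (2*k - i)]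
      ring
    rw [hrw]
    have h20 : (20:ℝ) ^ e ≤ (20:ℝ) ^ (k ^ 2) :=
      pow_le_pow_right₀ (by norm_num) heK
    have hexp : ((2*k - i : ℕ):ℝ) + (-(2 : ℝ) / (k : ℝ)) * e ≤ (2 : ℝ) / (k : ℝ) := by
      have hcast1 : ((2*k - i : ℕ):ℝ) = 2*(k:ℝ) - (i:ℝ) := by
        rw [Nat.cast_sub (by omega)]; push_cast; ring
      have hcast2 : ((e : ℕ):ℝ) = (k:ℝ) * ((k:ℝ) - 1) - (i:ℝ) * ((i:ℝ) - 1) / 2 := by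
        rw [he, Nat.cast_sub hc2, Nat.cast_mul, Nat.cast_sub (by omega),
          Nat.cast_choose_two]
        push_cast; ring
      rw [hcast1, hcast2, le_div_iff₀ hK0]
      have hx2 : (2:ℝ) ≤ (i:ℝ) := by exact_mod_cast hi2
      have hxK : (i:ℝ) ≤ (k:ℝ) - 1 := by
        have : (i:ℝ) ≤ ((k-1 : ℕ):ℝ) := by exact_mod_cast hik
        rw [Nat.cast_sub (by omega)] at this; simpa using this
      have hKne : (k:ℝ) ≠ 0 := ne_of_gt hK0
      field_simp
      nlinarith [mul_nonneg (sub_nonneg.2 hx2) (sub_nonneg.2 hxK)]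
    exact mul_le_mul h20 (Real.rpow_le_rpow_of_exponent_le hN1 hexp)
      (by positivity) (by positivity)
  refine le_trans (Finset.sum_le_sum key) ?_
  rw [Finset.sum_const, nsmul_eq_mul, mul_assoc]
  apply mul_le_mul_of_nonneg_right _ (by positivity)
  rw [Nat.card_Icc]
  exact_mod_cast (by omega : k - 1 + 1 - 2 ≤ k)
end
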